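/- arXiv:0707.2414 — 3 statements merged into one kernel-verified Lean document; each statement's English description precedes it below -/
import Mathlib

section
/- Intermediate exponential estimate in the proof of Theorem 1: Assume p > 1 and q > 1 with 1/p + 1/q = 1, and assume g ∈ H{G_1,…,G_n} and f ∈ H{F_1,…,F_n}. Suppose there exist real constants ε > 0, ξ_i > 0, α_{ij}, β_{ij} (i,j = 1,…,n) such that for every i: (−d̲_i + ε)ξ_i + G_i[ξ_i a*_{ii} + (1/p)Σ_{j≠i} ξ_j (a*_{ji})^{α_{ji}p}] + (1/q)ξ_i Σ_{j≠i} G_j (a*_{ij})^{(1−α_{ij})q} + (1/p)F_i Σ_{j=1}^n ξ_j (b*_{ji})^{β_{ji}p} e^{ε τ_{ji}} + (1/q)ξ_i Σ_{j=1}^n F_j (b*_{ij})^{(1−β_{ij})q} e^{ε τ_{ij}} ≤ 0. Then every solution u of the system satisfies: for each i = 1,…,n there is a constant C > 0 with |u_i(t + ω) − u_i(t)| ≤ C e^{−εt} for all t ≥ 0. -/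
open Real Finset

lemma rpow_split_one {x : ℝ} (hx : 0 ≤ x) {s t : ℝ} (hst : s + t = 1) :
    x ^ s * x ^ t = x := by
  rcases eq_or_lt_of_le hx with h | h
  · have hst' : s ≠ 0 ∨ t ≠ 0 := by
      by_contra hc
      push_neg at hc
      rw [hc.1, hc.2] at hst; norm_num at hst
    rcases hst' with h1 | h1
    · rw [← h, Real.zero_rpow h1, zero_mul]
    · rw [← h, Real.zero_rpow h1, mul_zero]
  · rw [← Real.rpow_add h, hst, Real.rpow_one]

lemma young_gen {p q : ℝ} (hpq : Real.HolderConjugate p q) {A E Y1 Y2 : ℝ}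
    (hA : 0 ≤ A) (hE : 0 < E) (hY1 : 0 ≤ Y1) (hY2 : 0 ≤ Y2) (α : ℝ) :
    A * E * Y1 ^ (p - 1) * Y2 ≤
      1 / p * (A ^ (α * p) * E * Y2 ^ p) + 1 / q * (A ^ ((1 - α) * q) * E * Y1 ^ p) := by
  have hp0 : (0:ℝ) < p := hpq.pos
  have hq0 : (0:ℝ) < q := hpq.symm.pos
  have hiv : 1/p + 1/q = 1 := by
    rw [one_div, one_div]; exact hpq.inv_add_inv_eq_one
  have key := Real.young_inequality_of_nonneg
    (a := A ^ α * E ^ (1/p) * Y2) (b := A ^ (1 - α) * E ^ (1/q) * Y1 ^ (p - 1))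
    (by positivity) (by positivity) hpq
  have hEsplit : E ^ (1/p) * E ^ (1/q) = E := rpow_split_one hE.le hiv
  have hAsplit : A ^ α * A ^ (1 - α) = A := rpow_split_one hA (by ring)
  have hlhs : A ^ α * E ^ (1/p) * Y2 * (A ^ (1 - α) * E ^ (1/q) * Y1 ^ (p - 1))
      = A * E * Y1 ^ (p - 1) * Y2 := by
    calc A ^ α * E ^ (1/p) * Y2 * (A ^ (1 - α) * E ^ (1/q) * Y1 ^ (p - 1))
        = (A ^ α * A ^ (1 - α)) * (E ^ (1/p) * E ^ (1/q)) * Y1 ^ (p - 1) * Y2 := by ring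
      _ = A * E * Y1 ^ (p - 1) * Y2 := by rw [hEsplit, hAsplit]
  have hEp : (E ^ (1/p)) ^ p = E := by
    rw [← Real.rpow_mul hE.le, one_div, inv_mul_cancel₀ hp0.ne', Real.rpow_one]
  have hEq : (E ^ (1/q)) ^ q = E := by
    rw [← Real.rpow_mul hE.le, one_div, inv_mul_cancel₀ hq0.ne', Real.rpow_one]
  have hApow : (A ^ α) ^ p = A ^ (α * p) := by rw [← Real.rpow_mul hA]
  have hAq : (A ^ (1 - α)) ^ q = A ^ ((1 - α) * q) := by rw [← Real.rpow_mul hA]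
  have hY1q : (Y1 ^ (p - 1)) ^ q = Y1 ^ p := by
    rw [← Real.rpow_mul hY1, hpq.sub_one_mul_conj]
  have hrhs1 : (A ^ α * E ^ (1/p) * Y2) ^ p = A ^ (α * p) * E * Y2 ^ p := by
    rw [Real.mul_rpow (by positivity) hY2, Real.mul_rpow (by positivity) (by positivity),
      hApow, hEp]
  have hrhs2 : (A ^ (1 - α) * E ^ (1/q) * Y1 ^ (p - 1)) ^ q
      = A ^ ((1 - α) * q) * E * Y1 ^ p := by
    rw [Real.mul_rpow (by positivity) (by positivity),
      Real.mul_rpow (by positivity) (by positivity), hAq, hEq, hY1q]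
  rw [hlhs, hrhs1, hrhs2] at key
  calc A * E * Y1 ^ (p - 1) * Y2
      ≤ A ^ (α * p) * E * Y2 ^ p / p + A ^ ((1 - α) * q) * E * Y1 ^ p / q := key
    _ = 1 / p * (A ^ (α * p) * E * Y2 ^ p) + 1 / q * (A ^ ((1 - α) * q) * E * Y1 ^ p) := by
        ring

lemma abs_rpow_sub_two_sq {x pp : ℝ} (hpp : 1 < pp) : |x| ^ (pp - 2) * x ^ 2 = |x| ^ pp := by
  rcases eq_or_ne x 0 with rfl | hx
  · rw [abs_zero, Real.zero_rpow (by linarith : pp ≠ 0)]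
    ring
  · have h : (0:ℝ) < |x| := abs_pos.2 hx
    rw [← sq_abs, ← Real.rpow_two, ← Real.rpow_add h]
    congr 1; ring

lemma abs_rpow_sub_two_abs {x pp : ℝ} (hpp : 1 < pp) : |x| ^ (pp - 2) * |x| = |x| ^ (pp - 1) := by
  rcases eq_or_ne x 0 with rfl | hx
  · rw [abs_zero, Real.zero_rpow (by intro h; linarith [sub_eq_zero.1 h] : pp - 1 ≠ 0), mul_zero]
  · have h : (0:ℝ) < |x| := abs_pos.2 hx
    calc |x| ^ (pp - 2) * |x| = |x| ^ (pp - 2) * |x| ^ (1:ℝ) := by rw [Real.rpow_one]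
      _ = |x| ^ (pp - 2 + 1) := (Real.rpow_add h _ _).symm
      _ = |x| ^ (pp - 1) := by congr 1; ring

lemma rpow_sub_one_mul {x pp : ℝ} (hpp : 1 < pp) (hx : 0 ≤ x) : x ^ (pp - 1) * x = x ^ pp := by
  rcases eq_or_lt_of_le hx with h | h
  · rw [← h, Real.zero_rpow (by linarith : pp ≠ 0), mul_zero]
  · calc x ^ (pp - 1) * x = x ^ (pp - 1) * x ^ (1:ℝ) := by rw [Real.rpow_one]
      _ = x ^ (pp - 1 + 1) := (Real.rpow_add h _ _).symm
      _ = x ^ pp := by congr 1; ring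

lemma periodic_abs_le {φ : ℝ → ℝ} {ω s : ℝ} (hω : 0 < ω) (hper : Function.Periodic φ ω)
    (hs : IsLUB ((fun t => |φ t|) '' Set.Ioc 0 ω) s) (t : ℝ) : |φ t| ≤ s := by
  obtain ⟨y, hy, hyx⟩ := hper.exists_mem_Ioc hω t 0
  rw [hyx]
  exact hs.1 ⟨y, by simpa using hy, rfl⟩

lemma sum_erase_swap {n : ℕ} (h : Fin n → Fin n → ℝ) :
    ∑ j, ∑ k ∈ univ.erase j, h j k = ∑ j, ∑ k ∈ univ.erase j, h k j := by
  have e1 : ∀ ψ : Fin n → Fin n → ℝ, ∀ j : Fin n,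
      ∑ k ∈ univ.erase j, ψ j k = (∑ k, ψ j k) - ψ j j :=
    fun ψ j => Finset.sum_erase_eq_sub (mem_univ j)
  rw [Finset.sum_congr rfl fun j _ => e1 h j,
    Finset.sum_congr rfl fun j _ => e1 (fun j k => h k j) j,
    Finset.sum_sub_distrib, Finset.sum_sub_distrib, Finset.sum_comm]

lemma key_ineq {n : ℕ} (p q ε : ℝ) (hp0 : 0 < p) (hq0 : 0 < q)
    (G F ξ dlow : Fin n → ℝ)
    (astar bstar τ α β : Fin n → Fin n → ℝ)
    (P : Fin n → ℝ) (Pd : Fin n → Fin n → ℝ) (hP : ∀ j, 0 ≤ P j)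
    (hineq : ∀ i,
      (-dlow i + ε) * ξ i
        + G i * (ξ i * astar i i
            + (1 / p) * ∑ j ∈ univ.erase i, ξ j * (astar j i) ^ (α j i * p))
        + (1 / q) * ξ i * ∑ j ∈ univ.erase i, G j * (astar i j) ^ ((1 - α i j) * q)
        + (1 / p) * F i * ∑ j, ξ j * (bstar j i) ^ (β j i * p) * exp (ε * τ j i)
        + (1 / q) * ξ i * ∑ j, F j * (bstar i j) ^ ((1 - β i j) * q) * exp (ε * τ i j)
        ≤ 0) :
    (∑ j, (p * ξ j * ((ε - dlow j) * P j)
      + p * ξ j * (G j * (astar j j * P j))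
      + p * ξ j * (∑ k ∈ univ.erase j, G k * (1/p * (astar j k ^ (α j k * p) * P k)
          + 1/q * (astar j k ^ ((1 - α j k) * q) * P j)))
      + p * ξ j * (∑ k, F k * (1/p * (bstar j k ^ (β j k * p) * exp (ε * τ j k) * Pd j k)
          + 1/q * (bstar j k ^ ((1 - β j k) * q) * exp (ε * τ j k) * P j)))))
    + (∑ j, ∑ k, ξ j * F k * bstar j k ^ (β j k * p) * exp (ε * τ j k) * (P k - Pd j k))
    ≤ 0 := by
  have hp1 : p * (1/p) = 1 := by field_simp
  -- expand the a-Young sums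
  have e1 : ∀ j, p * ξ j * (∑ k ∈ univ.erase j, G k * (1/p * (astar j k ^ (α j k * p) * P k)
          + 1/q * (astar j k ^ ((1 - α j k) * q) * P j)))
      = (∑ k ∈ univ.erase j, ξ j * G k * astar j k ^ (α j k * p) * P k)
        + p * (1/q) * ξ j * (∑ k ∈ univ.erase j, G k * astar j k ^ ((1 - α j k) * q)) * P j := by
    intro j
    rw [Finset.mul_sum]
    calc ∑ k ∈ univ.erase j, p * ξ j * (G k * (1/p * (astar j k ^ (α j k * p) * P k)
            + 1/q * (astar j k ^ ((1 - α j k) * q) * P j)))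
        = ∑ k ∈ univ.erase j, (ξ j * G k * astar j k ^ (α j k * p) * P k
            + p * (1/q) * ξ j * (G k * astar j k ^ ((1 - α j k) * q)) * P j) := by
          refine Finset.sum_congr rfl fun k _ => ?_
          linear_combination (ξ j * G k * (astar j k ^ (α j k * p) * P k)) * hp1
      _ = (∑ k ∈ univ.erase j, ξ j * G k * astar j k ^ (α j k * p) * P k)
          + ∑ k ∈ univ.erase j, p * (1/q) * ξ j * (G k * astar j k ^ ((1 - α j k) * q)) * P j :=
          Finset.sum_add_distrib
      _ = (∑ k ∈ univ.erase j, ξ j * G k * astar j k ^ (α j k * p) * P k)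
          + p * (1/q) * ξ j * (∑ k ∈ univ.erase j, G k * astar j k ^ ((1 - α j k) * q)) * P j := by
          rw [← Finset.sum_mul, ← Finset.mul_sum]
  -- expand the b-Young sums
  have e2 : ∀ j, p * ξ j * (∑ k, F k * (1/p * (bstar j k ^ (β j k * p) * exp (ε * τ j k) * Pd j k)
          + 1/q * (bstar j k ^ ((1 - β j k) * q) * exp (ε * τ j k) * P j)))
      = (∑ k, ξ j * F k * bstar j k ^ (β j k * p) * exp (ε * τ j k) * Pd j k)
        + p * (1/q) * ξ j * (∑ k, F k * bstar j k ^ ((1 - β j k) * q) * exp (ε * τ j k)) * P j := by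
    intro j
    rw [Finset.mul_sum]
    calc ∑ k, p * ξ j * (F k * (1/p * (bstar j k ^ (β j k * p) * exp (ε * τ j k) * Pd j k)
            + 1/q * (bstar j k ^ ((1 - β j k) * q) * exp (ε * τ j k) * P j)))
        = ∑ k, (ξ j * F k * bstar j k ^ (β j k * p) * exp (ε * τ j k) * Pd j k
            + p * (1/q) * ξ j * (F k * bstar j k ^ ((1 - β j k) * q) * exp (ε * τ j k)) * P j) := by
          refine Finset.sum_congr rfl fun k _ => ?_
          linear_combination (ξ j * F k * (bstar j k ^ (β j k * p) * exp (ε * τ j k) * Pd j k)) * hp1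
      _ = (∑ k, ξ j * F k * bstar j k ^ (β j k * p) * exp (ε * τ j k) * Pd j k)
          + ∑ k, p * (1/q) * ξ j * (F k * bstar j k ^ ((1 - β j k) * q) * exp (ε * τ j k)) * P j :=
          Finset.sum_add_distrib
      _ = (∑ k, ξ j * F k * bstar j k ^ (β j k * p) * exp (ε * τ j k) * Pd j k)
          + p * (1/q) * ξ j * (∑ k, F k * bstar j k ^ ((1 - β j k) * q) * exp (ε * τ j k)) * P j := by
          rw [← Finset.sum_mul, ← Finset.mul_sum]
  -- split the kappa sum
  have e3 : (∑ j, ∑ k, ξ j * F k * bstar j k ^ (β j k * p) * exp (ε * τ j k) * (P k - Pd j k))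
      = (∑ j, ∑ k, ξ j * F k * bstar j k ^ (β j k * p) * exp (ε * τ j k) * P k)
        - ∑ j, ∑ k, ξ j * F k * bstar j k ^ (β j k * p) * exp (ε * τ j k) * Pd j k := by
    rw [← Finset.sum_sub_distrib]
    refine Finset.sum_congr rfl fun j _ => ?_
    rw [← Finset.sum_sub_distrib]
    exact Finset.sum_congr rfl fun k _ => by ring
  -- swap the kappa P sum
  have e4 : (∑ j, ∑ k, ξ j * F k * bstar j k ^ (β j k * p) * exp (ε * τ j k) * P k)
      = ∑ j, F j * (∑ k, ξ k * bstar k j ^ (β k j * p) * exp (ε * τ k j)) * P j := by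
    rw [Finset.sum_comm]
    refine Finset.sum_congr rfl fun j _ => ?_
    calc ∑ k, ξ k * F j * bstar k j ^ (β k j * p) * exp (ε * τ k j) * P j
        = ∑ k, F j * (ξ k * bstar k j ^ (β k j * p) * exp (ε * τ k j)) * P j :=
          Finset.sum_congr rfl fun k _ => by ring
      _ = F j * (∑ k, ξ k * bstar k j ^ (β k j * p) * exp (ε * τ k j)) * P j := by
          rw [← Finset.sum_mul, ← Finset.mul_sum]
  -- swap the a-sum
  have e5 : (∑ j, ∑ k ∈ univ.erase j, ξ j * G k * astar j k ^ (α j k * p) * P k)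
      = ∑ j, G j * (∑ k ∈ univ.erase j, ξ k * astar k j ^ (α k j * p)) * P j := by
    rw [sum_erase_swap (fun j k => ξ j * G k * astar j k ^ (α j k * p) * P k)]
    refine Finset.sum_congr rfl fun j _ => ?_
    calc ∑ k ∈ univ.erase j, ξ k * G j * astar k j ^ (α k j * p) * P j
        = ∑ k ∈ univ.erase j, G j * (ξ k * astar k j ^ (α k j * p)) * P j :=
          Finset.sum_congr rfl fun k _ => by ring
      _ = G j * (∑ k ∈ univ.erase j, ξ k * astar k j ^ (α k j * p)) * P j := by
          rw [← Finset.sum_mul, ← Finset.mul_sum]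
  -- assemble
  have s1 : (∑ j, (p * ξ j * ((ε - dlow j) * P j)
      + p * ξ j * (G j * (astar j j * P j))
      + p * ξ j * (∑ k ∈ univ.erase j, G k * (1/p * (astar j k ^ (α j k * p) * P k)
          + 1/q * (astar j k ^ ((1 - α j k) * q) * P j)))
      + p * ξ j * (∑ k, F k * (1/p * (bstar j k ^ (β j k * p) * exp (ε * τ j k) * Pd j k)
          + 1/q * (bstar j k ^ ((1 - β j k) * q) * exp (ε * τ j k) * P j)))))
      = ∑ j, (p * ξ j * ((ε - dlow j) * P j) + p * ξ j * (G j * (astar j j * P j)) + ((∑ k ∈ univ.erase j, ξ j * G k * astar j k ^ (α j k * p) * P k) + p * (1/q) * ξ j * (∑ k ∈ univ.erase j, G k * astar j k ^ ((1 - α j k) * q)) * P j) + ((∑ k, ξ j * F k * bstar j k ^ (β j k * p) * exp (ε * τ j k) * Pd j k) + p * (1/q) * ξ j * (∑ k, F k * bstar j k ^ ((1 - β j k) * q) * exp (ε * τ j k)) * P j)) :=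
    Finset.sum_congr rfl fun j _ => by rw [e1 j, e2 j]
  have s2 : (∑ j, (p * ξ j * ((ε - dlow j) * P j) + p * ξ j * (G j * (astar j j * P j)) + ((∑ k ∈ univ.erase j, ξ j * G k * astar j k ^ (α j k * p) * P k) + p * (1/q) * ξ j * (∑ k ∈ univ.erase j, G k * astar j k ^ ((1 - α j k) * q)) * P j) + ((∑ k, ξ j * F k * bstar j k ^ (β j k * p) * exp (ε * τ j k) * Pd j k) + p * (1/q) * ξ j * (∑ k, F k * bstar j k ^ ((1 - β j k) * q) * exp (ε * τ j k)) * P j)))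
      = (∑ j, (p * ξ j * ((ε - dlow j) * P j) + p * ξ j * (G j * (astar j j * P j)) + p * (1/q) * ξ j * (∑ k ∈ univ.erase j, G k * astar j k ^ ((1 - α j k) * q)) * P j + p * (1/q) * ξ j * (∑ k, F k * bstar j k ^ ((1 - β j k) * q) * exp (ε * τ j k)) * P j)) + (∑ j, ∑ k ∈ univ.erase j, ξ j * G k * astar j k ^ (α j k * p) * P k) + (∑ j, ∑ k, ξ j * F k * bstar j k ^ (β j k * p) * exp (ε * τ j k) * Pd j k) := by
    rw [← Finset.sum_add_distrib, ← Finset.sum_add_distrib]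
    exact Finset.sum_congr rfl fun j _ => by ring
  have s3 : (∑ j, (p * ξ j * ((ε - dlow j) * P j) + p * ξ j * (G j * (astar j j * P j)) + p * (1/q) * ξ j * (∑ k ∈ univ.erase j, G k * astar j k ^ ((1 - α j k) * q)) * P j + p * (1/q) * ξ j * (∑ k, F k * bstar j k ^ ((1 - β j k) * q) * exp (ε * τ j k)) * P j)) + (∑ j, G j * (∑ k ∈ univ.erase j, ξ k * astar k j ^ (α k j * p)) * P j) + (∑ j, F j * (∑ k, ξ k * bstar k j ^ (β k j * p) * exp (ε * τ k j)) * P j)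
      = ∑ j, (p * ξ j * ((ε - dlow j) * P j) + p * ξ j * (G j * (astar j j * P j)) + p * (1/q) * ξ j * (∑ k ∈ univ.erase j, G k * astar j k ^ ((1 - α j k) * q)) * P j + p * (1/q) * ξ j * (∑ k, F k * bstar j k ^ ((1 - β j k) * q) * exp (ε * τ j k)) * P j + (G j * (∑ k ∈ univ.erase j, ξ k * astar k j ^ (α k j * p)) * P j) + (F j * (∑ k, ξ k * bstar k j ^ (β k j * p) * exp (ε * τ k j)) * P j)) := by
    rw [← Finset.sum_add_distrib, ← Finset.sum_add_distrib]
  have s4 : (∑ j, (p * ξ j * ((ε - dlow j) * P j) + p * ξ j * (G j * (astar j j * P j)) + p * (1/q) * ξ j * (∑ k ∈ univ.erase j, G k * astar j k ^ ((1 - α j k) * q)) * P j + p * (1/q) * ξ j * (∑ k, F k * bstar j k ^ ((1 - β j k) * q) * exp (ε * τ j k)) * P j + (G j * (∑ k ∈ univ.erase j, ξ k * astar k j ^ (α k j * p)) * P j) + (F j * (∑ k, ξ k * bstar k j ^ (β k j * p) * exp (ε * τ k j)) * P j)))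
      = ∑ j, p * ((-dlow j + ε) * ξ j
        + G j * (ξ j * astar j j
            + (1 / p) * ∑ k ∈ univ.erase j, ξ k * (astar k j) ^ (α k j * p))
        + (1 / q) * ξ j * ∑ k ∈ univ.erase j, G k * (astar j k) ^ ((1 - α j k) * q)
        + (1 / p) * F j * ∑ k, ξ k * (bstar k j) ^ (β k j * p) * exp (ε * τ k j)
        + (1 / q) * ξ j * ∑ k, F k * (bstar j k) ^ ((1 - β j k) * q) * exp (ε * τ j k)) * P j := by
    refine Finset.sum_congr rfl fun j _ => ?_
    linear_combination (-(G j * (∑ k ∈ univ.erase j, ξ k * astar k j ^ (α k j * p)) * P j)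
      - F j * (∑ k, ξ k * bstar k j ^ (β k j * p) * exp (ε * τ k j)) * P j) * hp1
  rw [s1, e3, e4, s2, e5]
  have s5 : (∑ j, (p * ξ j * ((ε - dlow j) * P j) + p * ξ j * (G j * (astar j j * P j)) + p * (1/q) * ξ j * (∑ k ∈ univ.erase j, G k * astar j k ^ ((1 - α j k) * q)) * P j + p * (1/q) * ξ j * (∑ k, F k * bstar j k ^ ((1 - β j k) * q) * exp (ε * τ j k)) * P j)) + (∑ j, G j * (∑ k ∈ univ.erase j, ξ k * astar k j ^ (α k j * p)) * P j) + (∑ j, ∑ k, ξ j * F k * bstar j k ^ (β j k * p) * exp (ε * τ j k) * Pd j k)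
      + ((∑ j, F j * (∑ k, ξ k * bstar k j ^ (β k j * p) * exp (ε * τ k j)) * P j) - (∑ j, ∑ k, ξ j * F k * bstar j k ^ (β j k * p) * exp (ε * τ j k) * Pd j k))
      = (∑ j, (p * ξ j * ((ε - dlow j) * P j) + p * ξ j * (G j * (astar j j * P j)) + p * (1/q) * ξ j * (∑ k ∈ univ.erase j, G k * astar j k ^ ((1 - α j k) * q)) * P j + p * (1/q) * ξ j * (∑ k, F k * bstar j k ^ ((1 - β j k) * q) * exp (ε * τ j k)) * P j)) + (∑ j, G j * (∑ k ∈ univ.erase j, ξ k * astar k j ^ (α k j * p)) * P j) + (∑ j, F j * (∑ k, ξ k * bstar k j ^ (β k j * p) * exp (ε * τ k j)) * P j) := by ring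
  rw [s5, s3, s4]
  apply Finset.sum_nonpos
  intro j _
  have h2 : p * ((-dlow j + ε) * ξ j
        + G j * (ξ j * astar j j
            + (1 / p) * ∑ k ∈ univ.erase j, ξ k * (astar k j) ^ (α k j * p))
        + (1 / q) * ξ j * ∑ k ∈ univ.erase j, G k * (astar j k) ^ ((1 - α j k) * q)
        + (1 / p) * F j * ∑ k, ξ k * (bstar k j) ^ (β k j * p) * exp (ε * τ k j)
        + (1 / q) * ξ j * ∑ k, F k * (bstar j k) ^ ((1 - β j k) * q) * exp (ε * τ j k)) ≤ 0 := by
    calc p * ((-dlow j + ε) * ξ j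
        + G j * (ξ j * astar j j
            + (1 / p) * ∑ k ∈ univ.erase j, ξ k * (astar k j) ^ (α k j * p))
        + (1 / q) * ξ j * ∑ k ∈ univ.erase j, G k * (astar j k) ^ ((1 - α j k) * q)
        + (1 / p) * F j * ∑ k, ξ k * (bstar k j) ^ (β k j * p) * exp (ε * τ k j)
        + (1 / q) * ξ j * ∑ k, F k * (bstar j k) ^ ((1 - β j k) * q) * exp (ε * τ j k)) ≤ p * 0 := mul_le_mul_of_nonneg_left (hineq j) hp0.le
      _ = 0 := mul_zero p
  calc p * ((-dlow j + ε) * ξ j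
        + G j * (ξ j * astar j j
            + (1 / p) * ∑ k ∈ univ.erase j, ξ k * (astar k j) ^ (α k j * p))
        + (1 / q) * ξ j * ∑ k ∈ univ.erase j, G k * (astar j k) ^ ((1 - α j k) * q)
        + (1 / p) * F j * ∑ k, ξ k * (bstar k j) ^ (β k j * p) * exp (ε * τ k j)
        + (1 / q) * ξ j * ∑ k, F k * (bstar j k) ^ ((1 - β j k) * q) * exp (ε * τ j k)) * P j ≤ 0 * P j := mul_le_mul_of_nonneg_right h2 (hP j)
    _ = 0 := zero_mul _

/-- `u : ℝ → Fin n → ℝ` is a solution of the delayed system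
`u_i'(t) = -d_i(t) u_i(t) + ∑_j a_{ij}(t) g_j(u_j(t)) + ∑_j b_{ij}(t) f_j(u_j(t - τ_{ij})) + I_i(t)`
on `[-τmax, ∞)`: it is continuous on `[-τmax, ∞)` and differentiable, satisfying the
equations, for `t > 0`. -/
def IsSolution (n : ℕ) (τmax : ℝ)
    (d : Fin n → ℝ → ℝ) (a b : Fin n → Fin n → ℝ → ℝ) (I : Fin n → ℝ → ℝ)
    (g f : Fin n → ℝ → ℝ) (τ : Fin n → Fin n → ℝ)
    (u : ℝ → Fin n → ℝ) : Prop :=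
  (∀ i, ContinuousOn (fun t => u t i) (Set.Ici (-τmax))) ∧
  (∀ i, ∀ t : ℝ, 0 < t → HasDerivAt (fun s => u s i)
      (-(d i t) * u t i + ∑ j, a i j t * g j (u t j)
        + ∑ j, b i j t * f j (u (t - τ i j) j) + I i t) t)

/-- `v : ℝ → Fin n → ℝ` solves the delayed system on all of `ℝ`. -/
def IsGlobalSolution (n : ℕ)
    (d : Fin n → ℝ → ℝ) (a b : Fin n → Fin n → ℝ → ℝ) (I : Fin n → ℝ → ℝ)
    (g f : Fin n → ℝ → ℝ) (τ : Fin n → Fin n → ℝ)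
    (v : ℝ → Fin n → ℝ) : Prop :=
  ∀ i, ∀ t : ℝ, HasDerivAt (fun s => v s i)
      (-(d i t) * v t i + ∑ j, a i j t * g j (v t j)
        + ∑ j, b i j t * f j (v (t - τ i j) j) + I i t) t

set_option maxHeartbeats 3000000 in
/-- Intermediate exponential estimate in the proof of Theorem 1: under the `L^p` criterion, every solution `u` satisfies `|u_i(t + ω) - u_i(t)| = O(e^{-εt})`. -/
theorem theorem1_intermediate
    (n : ℕ) (hn : 1 ≤ n) (ω : ℝ) (hω : 0 < ω)
    (d : Fin n → ℝ → ℝ) (a b : Fin n → Fin n → ℝ → ℝ) (I : Fin n → ℝ → ℝ)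
    (hd_cont : ∀ i, Continuous (d i)) (ha_cont : ∀ i j, Continuous (a i j))
    (hb_cont : ∀ i j, Continuous (b i j)) (hI_cont : ∀ i, Continuous (I i))
    (hd_per : ∀ i, Function.Periodic (d i) ω)
    (ha_per : ∀ i j, Function.Periodic (a i j) ω)
    (hb_per : ∀ i j, Function.Periodic (b i j) ω)
    (hI_per : ∀ i, Function.Periodic (I i) ω)
    (τ : Fin n → Fin n → ℝ) (hτ : ∀ i j, 0 ≤ τ i j)
    (τmax : ℝ) (hτmax : IsGreatest {x | ∃ i j, x = τ i j} τmax)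
    (dlow : Fin n → ℝ) (hdlow_pos : ∀ i, 0 < dlow i)
    (hdlow : ∀ i t, dlow i ≤ d i t)
    (astar bstar : Fin n → Fin n → ℝ)
    (hastar : ∀ i j, IsLUB ((fun t => |a i j t|) '' Set.Ioc 0 ω) (astar i j))
    (hbstar : ∀ i j, IsLUB ((fun t => |b i j t|) '' Set.Ioc 0 ω) (bstar i j))
    (G F : Fin n → ℝ) (hG : ∀ i, 0 < G i) (hF : ∀ i, 0 < F i)
    (g f : Fin n → ℝ → ℝ)
    (hg : ∀ i x u, |g i (x + u) - g i x| ≤ G i * |u|)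
    (hf : ∀ i x u, |f i (x + u) - f i x| ≤ F i * |u|)
    (p q : ℝ) (hp : 1 < p) (hq : 1 < q) (hpq : 1 / p + 1 / q = 1)
    (ε : ℝ) (hε : 0 < ε) (ξ : Fin n → ℝ) (hξ : ∀ i, 0 < ξ i)
    (α β : Fin n → Fin n → ℝ)
    (hineq : ∀ i,
      (-dlow i + ε) * ξ i
        + G i * (ξ i * astar i i
            + (1 / p) * ∑ j ∈ univ.erase i, ξ j * (astar j i) ^ (α j i * p))
        + (1 / q) * ξ i * ∑ j ∈ univ.erase i, G j * (astar i j) ^ ((1 - α i j) * q)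
        + (1 / p) * F i * ∑ j, ξ j * (bstar j i) ^ (β j i * p) * exp (ε * τ j i)
        + (1 / q) * ξ i * ∑ j, F j * (bstar i j) ^ ((1 - β i j) * q) * exp (ε * τ i j)
        ≤ 0) :
    ∀ u : ℝ → Fin n → ℝ, IsSolution n τmax d a b I g f τ u →
      ∀ i, ∃ C > 0, ∀ t : ℝ, 0 ≤ t →
        |u (t + ω) i - u t i| ≤ C * exp (-ε * t) := by
  intro u hu
  obtain ⟨hucont, hude⟩ := hu
  have hp0 : (0:ℝ) < p := by linarith
  have hq0 : (0:ℝ) < q := by linarith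
  have hpq' : Real.HolderConjugate p q := Real.holderConjugate_iff.mpr ⟨hp, by rw [← one_div, ← one_div]; exact hpq⟩
  have hτle : ∀ i j, τ i j ≤ τmax := fun i j => hτmax.2 ⟨i, j, rfl⟩
  have hτm0 : 0 ≤ τmax := by
    obtain ⟨i0, j0, hij⟩ := hτmax.1
    rw [hij]; exact hτ i0 j0
  have ha_bd : ∀ i j t, |a i j t| ≤ astar i j :=
    fun i j => periodic_abs_le hω (ha_per i j) (hastar i j)
  have hb_bd : ∀ i j t, |b i j t| ≤ bstar i j :=
    fun i j => periodic_abs_le hω (hb_per i j) (hbstar i j)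
  have ha_nn : ∀ i j, 0 ≤ astar i j := fun i j => (abs_nonneg _).trans (ha_bd i j 0)
  have hb_nn : ∀ i j, 0 ≤ bstar i j := fun i j => (abs_nonneg _).trans (hb_bd i j 0)
  set z : ℝ → Fin n → ℝ := fun t j => u (t + ω) j - u t j with hzdef
  set Dz : Fin n → ℝ → ℝ := fun j t =>
    -(d j t) * z t j + (∑ k, a j k t * (g k (u (t + ω) k) - g k (u t k)))
      + ∑ k, b j k t * (f k (u (t - τ j k + ω) k) - f k (u (t - τ j k) k)) with hDzdef
  have hzd : ∀ j t, 0 < t → HasDerivAt (fun s => z s j) (Dz j t) t := by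
    intro j t ht
    have h1 := (hude j (t + ω) (by linarith)).comp t ((hasDerivAt_id t).add_const ω)
    have h2 := h1.sub (hude j t ht)
    refine h2.congr_deriv ?_
    have hd' : ∀ x, d j (x + ω) = d j x := hd_per j
    have ha' : ∀ k x, a j k (x + ω) = a j k x := fun k => ha_per j k
    have hb' : ∀ k x, b j k (x + ω) = b j k x := fun k => hb_per j k
    have hI' : ∀ x, I j (x + ω) = I j x := hI_per j
    have harg : ∀ c : ℝ, t + ω - c = t - c + ω := fun c => by ring
    simp only [Function.comp, id_eq, harg, hd', ha', hb', hI', hDzdef, hzdef,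
      mul_sub, Finset.sum_sub_distrib, mul_one]
    ring
  have hzcont : ∀ j, ContinuousOn (fun t => z t j) (Set.Ici (-τmax)) := by
    intro j
    have h1 : ContinuousOn (fun t : ℝ => u (t + ω) j) (Set.Ici (-τmax)) := by
      apply (hucont j).comp (Continuous.continuousOn (by continuity))
      intro x hx
      simp only [Set.mem_Ici] at hx ⊢
      linarith
    exact h1.sub (hucont j)
  set v : Fin n → ℝ → ℝ := fun k s => exp (p * ε * s) * |z s k| ^ p with hvdef
  have hvcont : ∀ k, ContinuousOn (v k) (Set.Ici (-τmax)) := by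
    intro k
    apply ContinuousOn.mul
    · exact (continuous_exp.comp (continuous_const.mul continuous_id)).continuousOn
    · exact ((hzcont k).abs).rpow_const (fun x _ => Or.inr hp0.le)
  have hvnn : ∀ k s, 0 ≤ v k s := by
    intro k s
    rw [hvdef]
    positivity
  have hvint : ∀ k (x y : ℝ), -τmax ≤ x → -τmax ≤ y →
      IntervalIntegrable (v k) MeasureTheory.volume x y := by
    intro k x y hx hy
    apply ContinuousOn.intervalIntegrable
    apply (hvcont k).mono
    intro s hs
    rcases Set.mem_uIcc.1 hs with ⟨h1, _⟩ | ⟨h1, _⟩ <;> simp only [Set.mem_Ici] <;> linarith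
  set Φ : Fin n → ℝ → ℝ := fun k x => ∫ s in (-τmax)..x, v k s with hΦdef
  have hΦd : ∀ (k : Fin n) (x : ℝ), -τmax < x → HasDerivAt (Φ k) (v k x) x := by
    intro k x hx
    apply intervalIntegral.integral_hasDerivAt_right (hvint k (-τmax) x le_rfl hx.le)
    · exact ContinuousOn.stronglyMeasurableAtFilter isOpen_Ioi
        ((hvcont k).mono Set.Ioi_subset_Ici_self) x hx
    · exact (hvcont k).continuousAt (Filter.mem_of_superset (Ioi_mem_nhds hx)
        Set.Ioi_subset_Ici_self)
  have hΦsub : ∀ (k : Fin n) (x y : ℝ), -τmax ≤ x → -τmax ≤ y →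
      Φ k y - Φ k x = ∫ s in x..y, v k s := by
    intro k x y hx hy
    show (∫ s in (-τmax)..y, v k s) - ∫ s in (-τmax)..x, v k s = _
    exact intervalIntegral.integral_interval_sub_left (hvint k (-τmax) y le_rfl hy)
      (hvint k (-τmax) x le_rfl hx)
  set κ : Fin n → Fin n → ℝ := fun j k =>
    ξ j * F k * bstar j k ^ (β j k * p) * exp (ε * τ j k) with hκdef
  have hκnn : ∀ j k, 0 ≤ κ j k := by
    intro j k
    rw [hκdef]
    have := (hξ j).le
    have := (hF k).le
    have := hb_nn j k
    positivity
  set W : ℝ → ℝ := fun t => (∑ j, ξ j * v j t)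
    + ∑ j, ∑ k, κ j k * (Φ k t - Φ k (t - τ j k)) with hWdef
  set E : ℝ → ℝ := fun t => (∑ j, ξ j * (p * ε * exp (p * ε * t) * |z t j| ^ p
      + exp (p * ε * t) * (p * |z t j| ^ (p - 2) * z t j * Dz j t)))
      + ∑ j, ∑ k, κ j k * (v k t - v k (t - τ j k)) with hEdef
  have hWd : ∀ t, 0 < t → HasDerivAt W (E t) t := by
    intro t ht
    have hvd : ∀ j, HasDerivAt (v j) (p * ε * exp (p * ε * t) * |z t j| ^ p
        + exp (p * ε * t) * (p * |z t j| ^ (p - 2) * z t j * Dz j t)) t := by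
      intro j
      have h0 : HasDerivAt (fun s : ℝ => p * ε * s) (p * ε) t := by
        simpa using (hasDerivAt_id t).const_mul (p * ε)
      have h1 : HasDerivAt (fun s : ℝ => exp (p * ε * s)) (p * ε * exp (p * ε * t)) t := by
        have := h0.exp
        convert this using 1
        ring
      have h2 : HasDerivAt (fun s => |z s j| ^ p)
          (p * |z t j| ^ (p - 2) * z t j * Dz j t) t :=
        by have h := (hasDerivAt_abs_rpow (z t j) hp).comp t (hzd j t ht); exact h
      exact h1.mul h2
    have hsum1 : HasDerivAt (fun s => ∑ j, ξ j * v j s)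
        (∑ j, ξ j * (p * ε * exp (p * ε * t) * |z t j| ^ p
          + exp (p * ε * t) * (p * |z t j| ^ (p - 2) * z t j * Dz j t))) t :=
      HasDerivAt.fun_sum (fun j _ => (hvd j).const_mul (ξ j))
    have hΦpart : ∀ j k, HasDerivAt (fun s => Φ k s - Φ k (s - τ j k))
        (v k t - v k (t - τ j k)) t := by
      intro j k
      have hx1 : -τmax < t := by linarith
      have hx2 : -τmax < t - τ j k := by
        have := hτle j k
        linarith
      have hA := hΦd k t hx1
      have hB := (hΦd k (t - τ j k) hx2).comp t ((hasDerivAt_id t).sub_const (τ j k))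
      have hAB := hA.sub hB
      exact hAB.congr_deriv (by simp)
    have hsum2 : HasDerivAt (fun s => ∑ j, ∑ k, κ j k * (Φ k s - Φ k (s - τ j k)))
        (∑ j, ∑ k, κ j k * (v k t - v k (t - τ j k))) t :=
      HasDerivAt.fun_sum (fun j _ => HasDerivAt.fun_sum (fun k _ => (hΦpart j k).const_mul (κ j k)))
    exact hsum1.add hsum2
  have hE0 : ∀ t, 0 < t → E t ≤ 0 := by
    intro t ht
    set Y : Fin n → ℝ := fun j => exp (ε * t) * |z t j| with hYdef
    set Yd : Fin n → Fin n → ℝ := fun j k =>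
      exp (ε * (t - τ j k)) * |z (t - τ j k) k| with hYddef
    have hYnn : ∀ j, 0 ≤ Y j := fun j => by
      simp only [hYdef]; positivity
    have hYdnn : ∀ j k, 0 ≤ Yd j k := fun j k => by
      simp only [hYddef]; positivity
    have hvY : ∀ k, v k t = Y k ^ p := by
      intro k
      show exp (p * ε * t) * |z t k| ^ p = _
      simp only [hYdef]
      rw [Real.mul_rpow (exp_pos _).le (abs_nonneg _), ← Real.exp_mul,
        show ε * t * p = p * ε * t by ring]
    have hvYd : ∀ j k, v k (t - τ j k) = Yd j k ^ p := by
      intro j k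
      show exp (p * ε * (t - τ j k)) * |z (t - τ j k) k| ^ p = _
      simp only [hYddef]
      rw [Real.mul_rpow (exp_pos _).le (abs_nonneg _), ← Real.exp_mul,
        show ε * (t - τ j k) * p = p * ε * (t - τ j k) by ring]
    have hu2 : ∀ (s : ℝ) (k : Fin n), u (s + ω) k = u s k + z s k := by
      intro s k
      show u (s + ω) k = u s k + (u (s + ω) k - u s k)
      ring
    set R : Fin n → ℝ := fun j => (∑ k, G k * astar j k * |z t k|) + (∑ k, F k * bstar j k * |z (t - τ j k) k|) with hRdef
    have hzDz : ∀ j, z t j * Dz j t ≤ -(dlow j) * (z t j) ^ 2 + |z t j| * R j := by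
      intro j
      have hSa : |∑ k, a j k t * (g k (u (t + ω) k) - g k (u t k))| ≤ ∑ k, G k * astar j k * |z t k| := by
        refine le_trans (Finset.abs_sum_le_sum_abs _ _) (Finset.sum_le_sum fun k _ => ?_)
        rw [abs_mul]
        have h1 : |g k (u (t + ω) k) - g k (u t k)| ≤ G k * |z t k| := by
          rw [hu2 t k]
          exact hg k (u t k) (z t k)
        calc |a j k t| * |g k (u (t + ω) k) - g k (u t k)|
            ≤ astar j k * (G k * |z t k|) :=
              mul_le_mul (ha_bd j k t) h1 (abs_nonneg _) (ha_nn j k)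
          _ = G k * astar j k * |z t k| := by ring
      have hSb : |∑ k, b j k t * (f k (u (t - τ j k + ω) k) - f k (u (t - τ j k) k))| ≤ ∑ k, F k * bstar j k * |z (t - τ j k) k| := by
        refine le_trans (Finset.abs_sum_le_sum_abs _ _) (Finset.sum_le_sum fun k _ => ?_)
        rw [abs_mul]
        have h1 : |f k (u (t - τ j k + ω) k) - f k (u (t - τ j k) k)|
            ≤ F k * |z (t - τ j k) k| := by
          rw [hu2 (t - τ j k) k]
          exact hf k (u (t - τ j k) k) (z (t - τ j k) k)
        calc |b j k t| * |f k (u (t - τ j k + ω) k) - f k (u (t - τ j k) k)|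
            ≤ bstar j k * (F k * |z (t - τ j k) k|) :=
              mul_le_mul (hb_bd j k t) h1 (abs_nonneg _) (hb_nn j k)
          _ = F k * bstar j k * |z (t - τ j k) k| := by ring
      have hDzeq : Dz j t = -(d j t) * z t j
          + (∑ k, a j k t * (g k (u (t + ω) k) - g k (u t k)))
          + ∑ k, b j k t * (f k (u (t - τ j k + ω) k) - f k (u (t - τ j k) k)) := rfl
      have i1 : -(d j t) * (z t j) ^ 2 ≤ -(dlow j) * (z t j) ^ 2 := by
        nlinarith [sq_nonneg (z t j), hdlow j t]
      have i2 : z t j * (∑ k, a j k t * (g k (u (t + ω) k) - g k (u t k)))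
          ≤ |z t j| * (∑ k, G k * astar j k * |z t k|) := by
        calc z t j * (∑ k, a j k t * (g k (u (t + ω) k) - g k (u t k)))
            ≤ |z t j * (∑ k, a j k t * (g k (u (t + ω) k) - g k (u t k)))| := le_abs_self _
          _ = |z t j| * |∑ k, a j k t * (g k (u (t + ω) k) - g k (u t k))| := abs_mul _ _
          _ ≤ |z t j| * (∑ k, G k * astar j k * |z t k|) := mul_le_mul_of_nonneg_left hSa (abs_nonneg _)
      have i3 : z t j * (∑ k, b j k t * (f k (u (t - τ j k + ω) k) - f k (u (t - τ j k) k)))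
          ≤ |z t j| * (∑ k, F k * bstar j k * |z (t - τ j k) k|) := by
        calc z t j * (∑ k, b j k t * (f k (u (t - τ j k + ω) k) - f k (u (t - τ j k) k)))
            ≤ |z t j * (∑ k, b j k t * (f k (u (t - τ j k + ω) k) - f k (u (t - τ j k) k)))| :=
              le_abs_self _
          _ = |z t j| * |∑ k, b j k t * (f k (u (t - τ j k + ω) k) - f k (u (t - τ j k) k))| :=
              abs_mul _ _
          _ ≤ |z t j| * (∑ k, F k * bstar j k * |z (t - τ j k) k|) := mul_le_mul_of_nonneg_left hSb (abs_nonneg _)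
      have hRj : R j = (∑ k, G k * astar j k * |z t k|) + (∑ k, F k * bstar j k * |z (t - τ j k) k|) := rfl
      calc z t j * Dz j t
          = -(d j t) * (z t j) ^ 2
            + (z t j * (∑ k, a j k t * (g k (u (t + ω) k) - g k (u t k)))
              + z t j * (∑ k, b j k t * (f k (u (t - τ j k + ω) k) - f k (u (t - τ j k) k)))) := by
            rw [hDzeq]; ring
        _ ≤ -(dlow j) * (z t j) ^ 2 + (|z t j| * (∑ k, G k * astar j k * |z t k|) + |z t j| * (∑ k, F k * bstar j k * |z (t - τ j k) k|)) := by
            linarith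
        _ = -(dlow j) * (z t j) ^ 2 + |z t j| * R j := by rw [hRj]; ring
    have hee : exp (ε * t * (p - 1)) * exp (ε * t) = exp (p * ε * t) := by
      rw [← Real.exp_add]; congr 1; ring
    have i4 : ∀ j, exp (p * ε * t) * (|z t j| ^ (p - 1) * R j)
        = (∑ k, G k * (astar j k * Y j ^ (p - 1) * Y k)) + (∑ k, F k * (bstar j k * exp (ε * τ j k) * Y j ^ (p - 1) * Yd j k)) := by
      intro j
      have hRj : R j = (∑ k, G k * astar j k * |z t k|) + (∑ k, F k * bstar j k * |z (t - τ j k) k|) := rfl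
      have hA : exp (p * ε * t) * (|z t j| ^ (p - 1) * (∑ k, G k * astar j k * |z t k|)) = ∑ k, G k * (astar j k * Y j ^ (p - 1) * Y k) := by
        rw [Finset.mul_sum, Finset.mul_sum]
        refine Finset.sum_congr rfl fun k _ => ?_
        simp only [hYdef]
        rw [Real.mul_rpow (exp_pos _).le (abs_nonneg _), ← Real.exp_mul]
        linear_combination (-(|z t j| ^ (p - 1) * G k * astar j k * |z t k|)) * hee
      have hB : exp (p * ε * t) * (|z t j| ^ (p - 1) * (∑ k, F k * bstar j k * |z (t - τ j k) k|)) = ∑ k, F k * (bstar j k * exp (ε * τ j k) * Y j ^ (p - 1) * Yd j k) := by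
        rw [Finset.mul_sum, Finset.mul_sum]
        refine Finset.sum_congr rfl fun k _ => ?_
        simp only [hYdef, hYddef]
        rw [Real.mul_rpow (exp_pos _).le (abs_nonneg _), ← Real.exp_mul]
        have hee2 : exp (ε * τ j k) * (exp (ε * t * (p - 1)) * exp (ε * (t - τ j k)))
            = exp (p * ε * t) := by
          rw [← Real.exp_add, ← Real.exp_add]; congr 1; ring
        linear_combination (-(|z t j| ^ (p - 1) * F k * bstar j k * |z (t - τ j k) k|)) * hee2
      calc exp (p * ε * t) * (|z t j| ^ (p - 1) * R j)
          = exp (p * ε * t) * (|z t j| ^ (p - 1) * (∑ k, G k * astar j k * |z t k|))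
            + exp (p * ε * t) * (|z t j| ^ (p - 1) * (∑ k, F k * bstar j k * |z (t - τ j k) k|)) := by rw [hRj]; ring
        _ = (∑ k, G k * (astar j k * Y j ^ (p - 1) * Y k)) + (∑ k, F k * (bstar j k * exp (ε * τ j k) * Y j ^ (p - 1) * Yd j k)) := by rw [hA, hB]
    have hterm : ∀ j, ξ j * (p * ε * exp (p * ε * t) * |z t j| ^ p
        + exp (p * ε * t) * (p * |z t j| ^ (p - 2) * z t j * Dz j t))
        ≤ p * ξ j * ((ε - dlow j) * Y j ^ p) + p * ξ j * (G j * (astar j j * Y j ^ p))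
          + p * ξ j * (∑ k ∈ univ.erase j, G k * (1/p * (astar j k ^ (α j k * p) * Y k ^ p)
          + 1/q * (astar j k ^ ((1 - α j k) * q) * Y j ^ p)))
          + p * ξ j * (∑ k, F k * (1/p * (bstar j k ^ (β j k * p) * exp (ε * τ j k) * Yd j k ^ p)
          + 1/q * (bstar j k ^ ((1 - β j k) * q) * exp (ε * τ j k) * Y j ^ p))) := by
      intro j
      have i12 : |z t j| ^ (p - 2) * (z t j * Dz j t)
          ≤ -(dlow j) * |z t j| ^ p + |z t j| ^ (p - 1) * R j := by
        have ii1 : |z t j| ^ (p - 2) * (z t j * Dz j t)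
            ≤ |z t j| ^ (p - 2) * (-(dlow j) * (z t j) ^ 2 + |z t j| * R j) :=
          mul_le_mul_of_nonneg_left (hzDz j) (Real.rpow_nonneg (abs_nonneg _) _)
        have ii2 : |z t j| ^ (p - 2) * (-(dlow j) * (z t j) ^ 2 + |z t j| * R j)
            = -(dlow j) * |z t j| ^ p + |z t j| ^ (p - 1) * R j := by
          have e1 := abs_rpow_sub_two_sq (x := z t j) hp
          have e2 := abs_rpow_sub_two_abs (x := z t j) hp
          linear_combination (-(dlow j)) * e1 + (R j) * e2
        linarith
      have i3' : exp (p * ε * t) * |z t j| ^ p = Y j ^ p := hvY j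
      have i5 : ∀ k : Fin n, G k * (astar j k * Y j ^ (p - 1) * Y k)
          ≤ G k * (1/p * (astar j k ^ (α j k * p) * Y k ^ p)
            + 1/q * (astar j k ^ ((1 - α j k) * q) * Y j ^ p)) := by
        intro k
        refine mul_le_mul_of_nonneg_left ?_ (hG k).le
        have h := young_gen hpq' (ha_nn j k) one_pos (hYnn j) (hYnn k) (α j k)
        simpa using h
      have i6 : ∀ k : Fin n, F k * (bstar j k * exp (ε * τ j k) * Y j ^ (p - 1) * Yd j k)
          ≤ F k * (1/p * (bstar j k ^ (β j k * p) * exp (ε * τ j k) * Yd j k ^ p)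
            + 1/q * (bstar j k ^ ((1 - β j k) * q) * exp (ε * τ j k) * Y j ^ p)) := fun k =>
        mul_le_mul_of_nonneg_left
          (young_gen hpq' (hb_nn j k) (exp_pos _) (hYnn j) (hYdnn j k) (β j k)) (hF k).le
      have i7 : (∑ k, G k * (astar j k * Y j ^ (p - 1) * Y k)) = G j * (astar j j * Y j ^ (p - 1) * Y j)
          + ∑ k ∈ univ.erase j, G k * (astar j k * Y j ^ (p - 1) * Y k) :=
        (Finset.add_sum_erase univ (fun k => G k * (astar j k * Y j ^ (p - 1) * Y k))
          (mem_univ j)).symm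
      have i8 : astar j j * Y j ^ (p - 1) * Y j = astar j j * Y j ^ p := by
        linear_combination astar j j * (rpow_sub_one_mul hp (hYnn j))
      calc ξ j * (p * ε * exp (p * ε * t) * |z t j| ^ p
            + exp (p * ε * t) * (p * |z t j| ^ (p - 2) * z t j * Dz j t))
          = ξ j * p * ε * (exp (p * ε * t) * |z t j| ^ p)
            + (ξ j * p) * (exp (p * ε * t) * (|z t j| ^ (p - 2) * (z t j * Dz j t))) := by
            ring
        _ ≤ ξ j * p * ε * (exp (p * ε * t) * |z t j| ^ p)
            + (ξ j * p) * (exp (p * ε * t)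
              * (-(dlow j) * |z t j| ^ p + |z t j| ^ (p - 1) * R j)) := by
            have hh1 := mul_le_mul_of_nonneg_left i12 (exp_pos (p * ε * t)).le
            have hh2 := mul_le_mul_of_nonneg_left hh1
              (mul_nonneg (hξ j).le hp0.le)
            linarith
        _ = ξ j * p * ε * Y j ^ p + (ξ j * p) * (-(dlow j) * Y j ^ p
              + ((∑ k, G k * (astar j k * Y j ^ (p - 1) * Y k)) + (∑ k, F k * (bstar j k * exp (ε * τ j k) * Y j ^ (p - 1) * Yd j k)))) := by
            linear_combination (ξ j * p * ε - ξ j * p * dlow j) * i3' + (ξ j * p) * (i4 j)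
        _ ≤ ξ j * p * ε * Y j ^ p + (ξ j * p) * (-(dlow j) * Y j ^ p
              + ((G j * (astar j j * Y j ^ (p - 1) * Y j)
                + (∑ k ∈ univ.erase j, G k * (1/p * (astar j k ^ (α j k * p) * Y k ^ p)
          + 1/q * (astar j k ^ ((1 - α j k) * q) * Y j ^ p))))
                + (∑ k, F k * (1/p * (bstar j k ^ (β j k * p) * exp (ε * τ j k) * Yd j k ^ p)
          + 1/q * (bstar j k ^ ((1 - β j k) * q) * exp (ε * τ j k) * Y j ^ p))))) := by
            have hs1 : (∑ k ∈ univ.erase j, G k * (astar j k * Y j ^ (p - 1) * Y k))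
                ≤ ∑ k ∈ univ.erase j, G k * (1/p * (astar j k ^ (α j k * p) * Y k ^ p)
          + 1/q * (astar j k ^ ((1 - α j k) * q) * Y j ^ p)) := Finset.sum_le_sum fun k _ => i5 k
            have hs2 : (∑ k, F k * (bstar j k * exp (ε * τ j k) * Y j ^ (p - 1) * Yd j k)) ≤ ∑ k, F k * (1/p * (bstar j k ^ (β j k * p) * exp (ε * τ j k) * Yd j k ^ p)
          + 1/q * (bstar j k ^ ((1 - β j k) * q) * exp (ε * τ j k) * Y j ^ p)) := Finset.sum_le_sum fun k _ => i6 k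
            have hmul : (∑ k, G k * (astar j k * Y j ^ (p - 1) * Y k)) + (∑ k, F k * (bstar j k * exp (ε * τ j k) * Y j ^ (p - 1) * Yd j k))
                ≤ (G j * (astar j j * Y j ^ (p - 1) * Y j) + (∑ k ∈ univ.erase j, G k * (1/p * (astar j k ^ (α j k * p) * Y k ^ p)
          + 1/q * (astar j k ^ ((1 - α j k) * q) * Y j ^ p)))) + (∑ k, F k * (1/p * (bstar j k ^ (β j k * p) * exp (ε * τ j k) * Yd j k ^ p)
          + 1/q * (bstar j k ^ ((1 - β j k) * q) * exp (ε * τ j k) * Y j ^ p))) := by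
              rw [i7]
              linarith
            have hmul2 : -(dlow j) * Y j ^ p
                + ((∑ k, G k * (astar j k * Y j ^ (p - 1) * Y k))
                  + (∑ k, F k * (bstar j k * exp (ε * τ j k) * Y j ^ (p - 1) * Yd j k)))
                ≤ -(dlow j) * Y j ^ p + ((G j * (astar j j * Y j ^ (p - 1) * Y j)
                + (∑ k ∈ univ.erase j, G k * (1/p * (astar j k ^ (α j k * p) * Y k ^ p)
          + 1/q * (astar j k ^ ((1 - α j k) * q) * Y j ^ p))))
                + (∑ k, F k * (1/p * (bstar j k ^ (β j k * p) * exp (ε * τ j k) * Yd j k ^ p)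
          + 1/q * (bstar j k ^ ((1 - β j k) * q) * exp (ε * τ j k) * Y j ^ p)))) := by
              linarith
            have hfin := mul_le_mul_of_nonneg_left hmul2 (mul_nonneg (hξ j).le hp0.le)
            linarith
        _ = p * ξ j * ((ε - dlow j) * Y j ^ p) + p * ξ j * (G j * (astar j j * Y j ^ p))
            + p * ξ j * (∑ k ∈ univ.erase j, G k * (1/p * (astar j k ^ (α j k * p) * Y k ^ p)
          + 1/q * (astar j k ^ ((1 - α j k) * q) * Y j ^ p)))
            + p * ξ j * (∑ k, F k * (1/p * (bstar j k ^ (β j k * p) * exp (ε * τ j k) * Yd j k ^ p)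
          + 1/q * (bstar j k ^ ((1 - β j k) * q) * exp (ε * τ j k) * Y j ^ p))) := by
            linear_combination (ξ j * p * G j) * i8
    have hkey := key_ineq p q ε hp0 hq0 G F ξ dlow astar bstar τ α β
      (fun j => Y j ^ p) (fun j k => Yd j k ^ p)
      (fun j => Real.rpow_nonneg (hYnn j) p) hineq
    have h1 : (∑ j, ξ j * (p * ε * exp (p * ε * t) * |z t j| ^ p
        + exp (p * ε * t) * (p * |z t j| ^ (p - 2) * z t j * Dz j t)))
        ≤ ∑ j, (p * ξ j * ((ε - dlow j) * Y j ^ p) + p * ξ j * (G j * (astar j j * Y j ^ p))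
          + p * ξ j * (∑ k ∈ univ.erase j, G k * (1/p * (astar j k ^ (α j k * p) * Y k ^ p)
          + 1/q * (astar j k ^ ((1 - α j k) * q) * Y j ^ p)))
          + p * ξ j * (∑ k, F k * (1/p * (bstar j k ^ (β j k * p) * exp (ε * τ j k) * Yd j k ^ p)
          + 1/q * (bstar j k ^ ((1 - β j k) * q) * exp (ε * τ j k) * Y j ^ p)))) := Finset.sum_le_sum fun j _ => hterm j
    have h2 : (∑ j, ∑ k, κ j k * (v k t - v k (t - τ j k)))
        = ∑ j, ∑ k, ξ j * F k * bstar j k ^ (β j k * p) * exp (ε * τ j k)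
          * (Y k ^ p - Yd j k ^ p) := by
      refine Finset.sum_congr rfl fun j _ => Finset.sum_congr rfl fun k _ => ?_
      rw [hvY k, hvYd j k]
    show (∑ j, ξ j * (p * ε * exp (p * ε * t) * |z t j| ^ p
        + exp (p * ε * t) * (p * |z t j| ^ (p - 2) * z t j * Dz j t)))
      + (∑ j, ∑ k, κ j k * (v k t - v k (t - τ j k))) ≤ 0
    linarith [hkey, h1, h2.le, h2.ge]
  have hanti : AntitoneOn W (Set.Ici 1) := by
    apply antitoneOn_of_deriv_nonpos (convex_Ici 1)
    · intro x hx
      exact ((hWd x (by simp at hx; linarith)).continuousAt).continuousWithinAt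
    · intro x hx
      rw [interior_Ici] at hx
      exact ((hWd x (by simp at hx; linarith)).differentiableAt).differentiableWithinAt
    · intro x hx
      rw [interior_Ici] at hx
      have hx1 : (0:ℝ) < x := by simp at hx; linarith
      rw [(hWd x hx1).deriv]
      exact hE0 x hx1
  have hlow : ∀ t, 1 ≤ t → ∀ i, ξ i * v i t ≤ W t := by
    intro t ht i
    rw [hWdef]
    have h1 : ξ i * v i t ≤ ∑ j, ξ j * v j t := by
      apply Finset.single_le_sum (f := fun j => ξ j * v j t)
        (fun j _ => mul_nonneg (hξ j).le (hvnn j t)) (mem_univ i)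
    have h2 : (0:ℝ) ≤ ∑ j, ∑ k, κ j k * (Φ k t - Φ k (t - τ j k)) := by
      apply Finset.sum_nonneg
      intro j _
      apply Finset.sum_nonneg
      intro k _
      apply mul_nonneg (hκnn j k)
      rw [hΦsub k (t - τ j k) t (by linarith [hτle j k]) (by linarith)]
      exact intervalIntegral.integral_nonneg (by linarith [hτ j k]) (fun s _ => hvnn k s)
    show ξ i * v i t ≤ ∑ j, ξ j * v j t + ∑ j, ∑ k, κ j k * (Φ k t - Φ k (t - τ j k))
    linarith
  intro i
  -- bound on [0, 1]
  have hzci : ContinuousOn (fun t => |z t i|) (Set.Icc 0 1) := by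
    apply ContinuousOn.abs
    exact (hzcont i).mono (fun x hx => by simp at hx ⊢; linarith [hx.1])
  obtain ⟨x0, hx0mem, hx0⟩ := isCompact_Icc.exists_isMaxOn (by norm_num [Set.nonempty_Icc] : (Set.Icc (0:ℝ) 1).Nonempty) hzci
  set M : ℝ := |z x0 i| with hMdef
  have hM0 : 0 ≤ M := abs_nonneg _
  set C : ℝ := max (M * exp ε) ((W 1 / ξ i) ^ (1/p)) + 1 with hCdef
  have hC0 : 0 < C := by
    rw [hCdef]
    have h1 : 0 ≤ M * exp ε := mul_nonneg hM0 (exp_pos ε).le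
    have h2 : 0 ≤ max (M * exp ε) ((W 1 / ξ i) ^ (1/p)) := le_trans h1 (le_max_left _ _)
    linarith
  refine ⟨C, hC0, ?_⟩
  intro t ht
  have hzeq : u (t + ω) i - u t i = z t i := by rw [hzdef]
  rw [hzeq]
  rcases le_or_gt t 1 with hle | hgt
  · -- t ∈ [0,1]
    have h1 : |z t i| ≤ M := hx0 ⟨ht, hle⟩
    have h2 : exp (-ε) ≤ exp (-ε * t) := by
      apply exp_le_exp.2
      nlinarith
    have h3 : M = (M * exp ε) * exp (-ε) := by
      rw [mul_assoc, ← exp_add]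
      simp
    have h4 : (M * exp ε) * exp (-ε) ≤ (M * exp ε) * exp (-ε * t) :=
      mul_le_mul_of_nonneg_left h2 (mul_nonneg hM0 (exp_pos ε).le)
    have h5 : (M * exp ε) * exp (-ε * t) ≤ C * exp (-ε * t) := by
      apply mul_le_mul_of_nonneg_right _ (exp_pos _).le
      rw [hCdef]
      have := le_max_left (M * exp ε) ((W 1 / ξ i) ^ (1/p))
      linarith
    linarith
  · -- t ≥ 1
    have hWle : W t ≤ W 1 := hanti (by simp) (by simp [hgt.le] : t ∈ Set.Ici (1:ℝ)) hgt.le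
    have h1 : ξ i * v i t ≤ W 1 := le_trans (hlow t hgt.le i) hWle
    have h2 : v i t ≤ W 1 / ξ i := by
      rw [le_div_iff₀ (hξ i)]
      linarith [h1]
    have hYnn : 0 ≤ exp (ε * t) * |z t i| := mul_nonneg (exp_pos _).le (abs_nonneg _)
    have hYp : v i t = (exp (ε * t) * |z t i|) ^ p := by
      show exp (p * ε * t) * |z t i| ^ p = _
      rw [Real.mul_rpow (exp_pos _).le (abs_nonneg _), ← Real.exp_mul,
        show ε * t * p = p * ε * t by ring]
    have hv2 : (exp (ε * t) * |z t i|) ^ p ≤ W 1 / ξ i := hYp ▸ h2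
    have hY : exp (ε * t) * |z t i| ≤ (W 1 / ξ i) ^ (1/p) := by
      have h5 := Real.rpow_le_rpow (Real.rpow_nonneg hYnn p) hv2
        (by positivity : (0:ℝ) ≤ 1/p)
      rwa [← Real.rpow_mul hYnn, mul_one_div, div_self hp0.ne', Real.rpow_one] at h5
    have h3 : exp (ε * t) * |z t i| ≤ C := by
      rw [hCdef]
      have h6 := le_max_right (M * exp ε) ((W 1 / ξ i) ^ (1/p))
      linarith
    rw [neg_mul, exp_neg]
    calc |z t i| = (exp (ε * t))⁻¹ * (exp (ε * t) * |z t i|) := by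
            field_simp
      _ ≤ (exp (ε * t))⁻¹ * C := mul_le_mul_of_nonneg_left h3 (by positivity)
      _ = C * (exp (ε * t))⁻¹ := by ring
end

section
/- Theorem 4: Let n ≥ 1 and let c_i > 0, G_i > 0, F_i > 0, c_{ij} ≥ 0, d_{ij} ≥ 0, e_{ij} ≥ 0 (i,j = 1,…,n) be real numbers. Suppose there exist ξ_i > 0, real constants α_{ij}, β_{ij}, and p > 1, q > 1 with 1/p + 1/q = 1 such that for every i: −c_i ξ_i + (1/p)Σ_{j≠i} c_{ji}^{α_{ji}p} G_i ξ_j + (1/q)Σ_{j≠i} c_{ij}^{(1−α_{ij})q} G_j ξ_i + (1/p)Σ_{j≠i} d_{ji}^{β_{ji}p} e_{ji} F_i ξ_j + (1/q)Σ_{j≠i} d_{ij}^{(1−β_{ij})q} e_{ij} F_j ξ_i ≤ 0. Then there exist constants θ_i > 0 (i = 1,…,n) such that for every i: −c_i θ_i + G_i Σ_{j≠i} θ_j c_{ji} + F_i Σ_{j≠i} θ_j d_{ji} e_{ji} ≤ 0. -/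
section Aux

open Real Finset Matrix

attribute [local instance] Matrix.linftyOpNormedAddCommGroup Matrix.linftyOpNormedRing
  Matrix.linftyOpNormedAlgebra


section helpers
variable {p q : ℝ} (hp : 1 < p) (hq : 1 < q) (hpq : 1 / p + 1 / q = 1)

include hp hq hpq in
lemma young_ineq {u v : ℝ} (hu : 0 ≤ u) (hv : 0 ≤ v) :
    u ^ (1/p) * v ^ (1/q) ≤ (1/p) * u + (1/q) * v :=
  Real.geom_mean_le_arith_mean2_weighted (by positivity) (by positivity) hu hv hpq

include hp hq hpq in
lemma young_eq {u v : ℝ} (hu : 0 ≤ u) (hv : 0 ≤ v)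
    (h : u ^ (1/p) * v ^ (1/q) = (1/p) * u + (1/q) * v) : u = v := by
  have hp0 : (0:ℝ) < 1/p := by positivity
  have hq0 : (0:ℝ) < 1/q := by positivity
  rcases eq_or_lt_of_le hu with h0 | hu'
  · rw [← h0]
    rw [← h0, Real.zero_rpow (ne_of_gt hp0), zero_mul, mul_zero, zero_add] at h
    nlinarith [h.symm]
  rcases eq_or_lt_of_le hv with h0 | hv'
  · rw [← h0]
    rw [← h0, Real.zero_rpow (ne_of_gt hq0), mul_zero, mul_zero, add_zero] at h
    nlinarith [h.symm]
  by_contra hne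
  have hconc := strictConcaveOn_log_Ioi.2 (Set.mem_Ioi.2 hu') (Set.mem_Ioi.2 hv') hne hp0 hq0 hpq
  have hlhs : u ^ (1/p) * v ^ (1/q) = Real.exp ((1/p) * Real.log u + (1/q) * Real.log v) := by
    rw [Real.rpow_def_of_pos hu', Real.rpow_def_of_pos hv', ← Real.exp_add]
    ring_nf
  have hrhs : (0:ℝ) < (1/p) * u + (1/q) * v := by positivity
  have hlt : Real.exp ((1/p) * Real.log u + (1/q) * Real.log v)
      < (1/p) * u + (1/q) * v := by
    have h2 : (1/p) * Real.log u + (1/q) * Real.log v < Real.log ((1/p) * u + (1/q) * v) := by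
      simpa [smul_eq_mul] using hconc
    calc Real.exp ((1/p) * Real.log u + (1/q) * Real.log v)
        < Real.exp (Real.log ((1/p) * u + (1/q) * v)) := Real.exp_lt_exp.2 h2
      _ = (1/p) * u + (1/q) * v := Real.exp_log hrhs
  rw [hlhs] at h
  linarith

end helpers

section lemB
variable {n : ℕ}

lemma entry_le_linfty_norm (A : Matrix (Fin n) (Fin n) ℝ) (i j : Fin n) : |A i j| ≤ ‖A‖ := by
  have h1 : ‖A i j‖₊ ≤ ∑ j', ‖A i j'‖₊ :=
    Finset.single_le_sum (f := fun j' => ‖A i j'‖₊) (fun _ _ => zero_le) (mem_univ j)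
  have h2 : (∑ j', ‖A i j'‖₊) ≤ Finset.univ.sup fun i => ∑ j', ‖A i j'‖₊ :=
    Finset.le_sup (f := fun i => ∑ j', ‖A i j'‖₊) (mem_univ i)
  have := Matrix.linfty_opNNNorm_def A
  have h3 : ‖A i j‖₊ ≤ ‖A‖₊ := by rw [this]; exact h1.trans h2
  exact_mod_cast h3

lemma mul_entry_nonneg {A B : Matrix (Fin n) (Fin n) ℝ} (hA : ∀ i j, 0 ≤ A i j)
    (hB : ∀ i j, 0 ≤ B i j) : ∀ i j, 0 ≤ (A * B) i j := by
  intro i j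
  rw [Matrix.mul_apply]
  exact Finset.sum_nonneg fun l _ => mul_nonneg (hA i l) (hB l j)

lemma pow_entry_nonneg {A : Matrix (Fin n) (Fin n) ℝ} (hA : ∀ i j, 0 ≤ A i j) (k : ℕ) :
    ∀ i j, 0 ≤ (A ^ k) i j := by
  induction k with
  | zero => intro i j; simp [Matrix.one_apply]; positivity
  | succ m ih => rw [pow_succ]; exact mul_entry_nonneg ih hA

lemma nnnorm_map_ofReal (A : Matrix (Fin n) (Fin n) ℝ) :
    ‖A.map (Complex.ofReal ·)‖₊ = ‖A‖₊ := by
  rw [Matrix.linfty_opNNNorm_def, Matrix.linfty_opNNNorm_def]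
  congr 1
  funext i
  apply Finset.sum_congr rfl
  intro j _
  simp [Matrix.map_apply, Complex.nnnorm_real]

noncomputable def entryCLM (i j : Fin n) : Matrix (Fin n) (Fin n) ℝ →L[ℝ] ℝ :=
  LinearMap.mkContinuous
    { toFun := fun M => M i j
      map_add' := fun _ _ => rfl
      map_smul' := fun _ _ => rfl }
    1 (fun M => by
        rw [one_mul]
        exact (entry_le_linfty_norm M i j).trans_eq' (Real.norm_eq_abs _).symm)

lemma entry_tsum {g : ℕ → Matrix (Fin n) (Fin n) ℝ} (hg : Summable g) (i j : Fin n) :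
    (∑' m, g m) i j = ∑' m, (g m) i j := by
  have := (entryCLM i j).map_tsum hg
  exact this

lemma lemB (hn : 1 ≤ n) (A B : Matrix (Fin n) (Fin n) ℝ)
    (hApos : ∀ i j, 0 ≤ A i j) (hBpos : ∀ i j, 0 ≤ B i j)
    (hdet : ∀ μ : ℂ, ((μ • (1 : Matrix (Fin n) (Fin n) ℂ) - B.map (Complex.ofReal ·)).det = 0) →
      ((μ • (1 : Matrix (Fin n) (Fin n) ℂ) - A.map (Complex.ofReal ·)).det = 0))
    (hno : ∀ y : Fin n → ℝ, (∀ i, 0 ≤ y i) → (∃ i, y i ≠ 0) →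
      ∃ i, A.mulVec y i < y i) :
    ∃ θ : Fin n → ℝ, (∀ i, 1 ≤ θ i) ∧ ∀ i, ∑ l, B i l * θ l ≤ θ i := by
  haveI : Nonempty (Fin n) := ⟨⟨0, hn⟩⟩
  set Bc : Matrix (Fin n) (Fin n) ℂ := B.map (Complex.ofReal ·) with hBc
  -- step 1 : all eigenvalues of Bc are < 1 in norm
  have h1 : ∀ μ ∈ spectrum ℂ Bc, ‖μ‖₊ < 1 := by
    intro μ hμ
    rw [spectrum.mem_iff] at hμ
    have hdet0 : (μ • (1 : Matrix (Fin n) (Fin n) ℂ) - Bc).det = 0 := by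
      by_contra hne
      exact hμ (by
        rw [Algebra.algebraMap_eq_smul_one]
        exact (Matrix.isUnit_iff_isUnit_det _).2 (isUnit_iff_ne_zero.2 hne))
    have hdetA := hdet μ hdet0
    obtain ⟨z, hz0, hz⟩ := (Matrix.exists_mulVec_eq_zero_iff).2 hdetA
    have hzeig : (A.map (Complex.ofReal ·)).mulVec z = μ • z := by
      have := hz
      rw [Matrix.sub_mulVec, Matrix.smul_mulVec, Matrix.one_mulVec] at this
      have := sub_eq_zero.1 this
      exact this.symm
    by_contra hge
    push_neg at hge
    have hge' : (1 : ℝ) ≤ ‖μ‖ := by exact_mod_cast hge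
    set y : Fin n → ℝ := fun i => ‖z i‖ with hy
    have hy0 : ∀ i, 0 ≤ y i := fun i => norm_nonneg _
    have hyne : ∃ i, y i ≠ 0 := by
      obtain ⟨i, hi⟩ := Function.ne_iff.1 hz0
      exact ⟨i, by simpa [hy] using hi⟩
    obtain ⟨i, hlt⟩ := hno y hy0 hyne
    have : y i ≤ A.mulVec y i := by
      calc y i = ‖z i‖ := rfl
        _ ≤ ‖μ‖ * ‖z i‖ := le_mul_of_one_le_left (norm_nonneg _) hge'
        _ = ‖μ * z i‖ := (norm_mul _ _).symm
        _ = ‖((A.map (Complex.ofReal ·)).mulVec z) i‖ := by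
            rw [hzeig]; simp [Pi.smul_apply, smul_eq_mul]
        _ = ‖∑ j, (A.map (Complex.ofReal ·)) i j * z j‖ := by rw [Matrix.mulVec, dotProduct]
        _ ≤ ∑ j, ‖(A.map (Complex.ofReal ·)) i j * z j‖ := norm_sum_le _ _
        _ = ∑ j, A i j * y j := by
            apply Finset.sum_congr rfl
            intro j _
            rw [norm_mul, Matrix.map_apply, Complex.norm_real, Real.norm_eq_abs,
              abs_of_nonneg (hApos i j)]
        _ = A.mulVec y i := by rw [Matrix.mulVec, dotProduct]
    exact absurd this (not_le.2 hlt)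
  -- step 2 : spectral radius < 1
  have h2 : spectralRadius ℂ Bc < 1 := by
    have := spectrum.spectralRadius_lt_of_forall_lt Bc (r := 1) h1
    simpa using this
  -- step 3 : get k with ‖Bc ^ k‖₊ < 1
  obtain ⟨k, hk1, hklt⟩ : ∃ k, 1 ≤ k ∧ ‖Bc ^ k‖₊ < 1 := by
    have htd := spectrum.pow_nnnorm_pow_one_div_tendsto_nhds_spectralRadius Bc
    have hev : ∀ᶠ k : ℕ in Filter.atTop,
        ((‖Bc ^ k‖₊ : ENNReal) ^ (1 / (k : ℝ))) < 1 := htd.eventually_lt_const h2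
    obtain ⟨k, hklt, hk1⟩ := (hev.and (Filter.eventually_ge_atTop 1)).exists
    refine ⟨k, hk1, ?_⟩
    have hk0 : (0:ℝ) < 1 / (k:ℝ) := by
      have : (0:ℝ) < (k:ℝ) := by exact_mod_cast hk1
      positivity
    by_contra hge
    push_neg at hge
    have : (1 : ENNReal) ≤ (‖Bc ^ k‖₊ : ENNReal) := by exact_mod_cast hge
    have h1le : (1 : ENNReal) ≤ (‖Bc ^ k‖₊ : ENNReal) ^ (1 / (k:ℝ)) := by
      calc (1:ENNReal) = 1 ^ (1/(k:ℝ)) := (ENNReal.one_rpow _).symm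
        _ ≤ (‖Bc ^ k‖₊ : ENNReal) ^ (1 / (k:ℝ)) := ENNReal.rpow_le_rpow this hk0.le
    exact absurd hklt (not_lt.2 h1le)
  -- step 4 : transfer to ℝ
  have h4 : ‖B ^ k‖ < 1 := by
    have hmap : Bc ^ k = (B ^ k).map (Complex.ofReal ·) := by
      have : Bc = (Complex.ofRealHom.mapMatrix : Matrix (Fin n) (Fin n) ℝ →+* _) B := rfl
      rw [this, ← map_pow]
      rfl
    have : ‖Bc ^ k‖₊ = ‖B ^ k‖₊ := by rw [hmap, nnnorm_map_ofReal]
    have h5 : ‖B ^ k‖₊ < 1 := this ▸ hklt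
    exact_mod_cast h5
  -- step 5 : Neumann series
  have hsum : Summable (fun m : ℕ => (B ^ k) ^ m) := summable_geometric_of_norm_lt_one h4
  set S : Matrix (Fin n) (Fin n) ℝ := ∑' m : ℕ, (B ^ k) ^ m with hS
  have hSent : ∀ i j, 0 ≤ S i j := by
    intro i j
    rw [hS, entry_tsum hsum i j]
    exact tsum_nonneg (fun m => pow_entry_nonneg (pow_entry_nonneg hBpos k) m i j)
  -- T := (∑_{a<k} B^a) * S
  set T : Matrix (Fin n) (Fin n) ℝ := (∑ a ∈ Finset.range k, B ^ a) * S with hT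
  have hTent : ∀ i j, 0 ≤ T i j := by
    apply mul_entry_nonneg
    · intro i j
      rw [Matrix.sum_apply]
      exact Finset.sum_nonneg fun a _ => pow_entry_nonneg hBpos a i j
    · exact hSent
  have hid : (1 - B) * T = 1 := by
    have h6 : (1 - B) * (∑ a ∈ Finset.range k, B ^ a) = 1 - B ^ k := by
      have := mul_geom_sum B k
      have hneg : (1 - B) * (∑ a ∈ Finset.range k, B ^ a)
          = -((B - 1) * ∑ a ∈ Finset.range k, B ^ a) := by
        rw [← neg_mul, neg_sub]
      rw [hneg, this, neg_sub]
    rw [hT, ← mul_assoc, h6]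
    exact mul_neg_geom_series (B ^ k) h4
  have hBT : B * T = T - 1 := by
    have : T - B * T = 1 := by
      calc T - B * T = (1 - B) * T := by rw [sub_mul, one_mul]
        _ = 1 := hid
    linear_combination (norm := abel) -this
  -- θ := row sums of T
  refine ⟨fun i => ∑ j, T i j, ?_, ?_⟩
  · intro i
    have hrow : ∑ l, B i l * (∑ j, T l j) = (∑ j, T i j) - 1 := by
      have h7 : ∀ j, (B * T) i j = T i j - (1 : Matrix (Fin n) (Fin n) ℝ) i j := by
        intro j; rw [hBT]; simp [Matrix.sub_apply]
      calc ∑ l, B i l * (∑ j, T l j) = ∑ l, ∑ j, B i l * T l j := by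
            apply Finset.sum_congr rfl; intro l _; rw [Finset.mul_sum]
        _ = ∑ j, ∑ l, B i l * T l j := Finset.sum_comm
        _ = ∑ j, (B * T) i j := by
            apply Finset.sum_congr rfl; intro j _; rw [Matrix.mul_apply]
        _ = ∑ j, (T i j - (1 : Matrix (Fin n) (Fin n) ℝ) i j) := by
            apply Finset.sum_congr rfl; intro j _; exact h7 j
        _ = (∑ j, T i j) - 1 := by
            rw [Finset.sum_sub_distrib]
            congr 1
            simp [Matrix.one_apply]
      
    have hnn : 0 ≤ ∑ l, B i l * (∑ j, T l j) :=
      Finset.sum_nonneg fun l _ => mul_nonneg (hBpos i l)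
        (Finset.sum_nonneg fun j _ => hTent l j)
    linarith [hrow ▸ hnn]
  · intro i
    have hrow : ∑ l, B i l * (∑ j, T l j) = (∑ j, T i j) - 1 := by
      have h7 : ∀ j, (B * T) i j = T i j - (1 : Matrix (Fin n) (Fin n) ℝ) i j := by
        intro j; rw [hBT]; simp [Matrix.sub_apply]
      calc ∑ l, B i l * (∑ j, T l j) = ∑ l, ∑ j, B i l * T l j := by
            apply Finset.sum_congr rfl; intro l _; rw [Finset.mul_sum]
        _ = ∑ j, ∑ l, B i l * T l j := Finset.sum_comm
        _ = ∑ j, (B * T) i j := by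
            apply Finset.sum_congr rfl; intro j _; rw [Matrix.mul_apply]
        _ = ∑ j, (T i j - (1 : Matrix (Fin n) (Fin n) ℝ) i j) := by
            apply Finset.sum_congr rfl; intro j _; exact h7 j
        _ = (∑ j, T i j) - 1 := by
            rw [Finset.sum_sub_distrib]
            congr 1
            simp [Matrix.one_apply]
    rw [hrow]
    linarith


end lemB



section keylemma

variable {n : ℕ}

lemma sum_erase_ite (s : Finset (Fin n)) (i : Fin n) (g : Fin n → ℝ) :
    ∑ j ∈ s.erase i, g j = ∑ j ∈ s, if j ≠ i then g j else 0 := by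
  rw [← Finset.sum_erase (f := fun j => if j ≠ i then g j else 0) (a := i) s (by simp)]
  apply Finset.sum_congr rfl
  intro j hj
  rw [if_pos (Finset.ne_of_mem_erase hj)]

lemma sum_pairs_comm (s : Finset (Fin n)) (f : Fin n → Fin n → ℝ) :
    ∑ i ∈ s, ∑ j ∈ s.erase i, f i j = ∑ i ∈ s, ∑ j ∈ s.erase i, f j i := by
  have h : ∀ g : Fin n → Fin n → ℝ, ∑ i ∈ s, ∑ j ∈ s.erase i, g i j
      = ∑ i ∈ s, ∑ j ∈ s, if j ≠ i then g i j else 0 := by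
    intro g
    exact Finset.sum_congr rfl fun i _ => sum_erase_ite s i _
  rw [h f, h (fun i j => f j i), Finset.sum_comm]
  apply Finset.sum_congr rfl
  intro i _
  apply Finset.sum_congr rfl
  intro j _
  by_cases hij : i ≠ j
  · rw [if_pos hij, if_pos hij.symm]
  · push_neg at hij
    subst hij
    simp

lemma key (hn : 1 ≤ n) (p q : ℝ) (hp : 1 < p) (hq : 1 < q) (hpq : 1 / p + 1 / q = 1)
    (a b V : Fin n → Fin n → ℝ) (c ξ : Fin n → ℝ)
    (ha : ∀ i j, 0 ≤ a i j) (hb : ∀ i j, 0 ≤ b i j)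
    (hc : ∀ i, 0 < c i) (hξ : ∀ i, 0 < ξ i)
    (hV0 : ∀ i j, 0 ≤ V i j) (hVle : ∀ i j, V i j ≤ a i j ^ (1/p) * b i j ^ (1/q))
    (hyp : ∀ i, (1/p) * (∑ j ∈ univ.erase i, a j i * ξ j)
      + (1/q) * ξ i * (∑ j ∈ univ.erase i, b i j) ≤ c i * ξ i) :
    ∀ s : Finset (Fin n), ∃ θ : Fin n → ℝ, (∀ i, 0 < θ i) ∧
      ∀ i ∈ s, ∑ j ∈ s.erase i, V j i * θ j ≤ c i * θ i := by
  intro s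
  induction s using Finset.strongInduction with
  | _ s ih =>
  by_cases hA : ∃ y : Fin n → ℝ, (∀ i, 0 ≤ y i) ∧ (∀ i, i ∉ s → y i = 0) ∧ (∃ i, 0 < y i) ∧
      (∀ i ∈ s, c i * y i ≤ ∑ j ∈ s.erase i, V i j * y j)
  · -- CASE A : a certificate exists; rigidity argument
    classical
    obtain ⟨y, hy0, hysupp, hypos, hycert⟩ := hA
    have hp0 : (0:ℝ) < p := lt_trans one_pos hp
    have hq0 : (0:ℝ) < q := lt_trans one_pos hq
    have hp1 : (0:ℝ) < p - 1 := by linarith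
    have hpinv : (0:ℝ) < 1/p := by positivity
    have hqinv : (0:ℝ) < 1/q := by positivity
    have hppq : p * (1/q) = p - 1 := by
      have h1 : p * (1/p) = 1 := by field_simp
      have h2 : p * (1/p) + p * (1/q) = p := by
        rw [← mul_add, hpq, mul_one]
      linarith
    have hyp_pow : ∀ t : ℝ, 0 ≤ t → t ^ (p-1) * t = t ^ p := by
      intro t ht
      rcases eq_or_lt_of_le ht with h0 | h0
      · rw [← h0, Real.zero_rpow (ne_of_gt hp1), Real.zero_rpow (ne_of_gt hp0), zero_mul]
      · calc t ^ (p-1) * t = t ^ (p-1) * t ^ (1:ℝ) := by rw [Real.rpow_one]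
          _ = t ^ (p-1+1) := (Real.rpow_add h0 _ _).symm
          _ = t ^ p := by ring_nf
    have hpow_p_p : ∀ t : ℝ, 0 ≤ t → (t ^ p) ^ (1/p) = t := by
      intro t ht
      rw [← Real.rpow_mul ht, mul_one_div, div_self (ne_of_gt hp0), Real.rpow_one]
    have hpow_p_q : ∀ t : ℝ, 0 ≤ t → (t ^ p) ^ (1/q) = t ^ (p-1) := by
      intro t ht
      rw [← Real.rpow_mul ht, hppq]
    set S : Finset (Fin n) := s.filter (fun i => 0 < y i) with hSdef
    set s' : Finset (Fin n) := s.filter (fun i => ¬ 0 < y i) with hs'def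
    have hSsub : S ⊆ s := Finset.filter_subset _ _
    have hSmem : ∀ i, i ∈ S ↔ i ∈ s ∧ 0 < y i := fun i => Finset.mem_filter
    have hs'mem : ∀ i, i ∈ s' ↔ i ∈ s ∧ ¬ 0 < y i := fun i => Finset.mem_filter
    obtain ⟨i₀, hi₀⟩ := hypos
    have hi₀s : i₀ ∈ s := by
      by_contra h
      rw [hysupp i₀ h] at hi₀
      exact lt_irrefl 0 hi₀
    have hi₀S : i₀ ∈ S := (hSmem i₀).2 ⟨hi₀s, hi₀⟩
    have hs'ss : s' ⊂ s := by
      refine Finset.ssubset_iff_of_subset (Finset.filter_subset _ _) |>.2 ?_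
      exact ⟨i₀, hi₀s, by rw [hs'mem]; tauto⟩
    have hyz : ∀ j, j ∉ S → y j = 0 := by
      intro j hj
      by_cases hjs : j ∈ s
      · by_contra hne
        exact hj ((hSmem j).2 ⟨hjs, lt_of_le_of_ne (hy0 j) (Ne.symm hne)⟩)
      · exact hysupp j hjs
    set L : Fin n → Fin n → ℝ := fun i j => V i j * (ξ i * y i ^ (p-1)) * y j with hLdef
    set R : Fin n → Fin n → ℝ := fun i j =>
      (1/p) * (a i j * y j ^ p * ξ i) + (1/q) * (b i j * y i ^ p * ξ i) with hRdef
    have hLval : ∀ i j, L i j = V i j * (ξ i * y i ^ (p-1)) * y j := fun i j => rfl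
    have hRval : ∀ i j, R i j =
      (1/p) * (a i j * y j ^ p * ξ i) + (1/q) * (b i j * y i ^ p * ξ i) := fun i j => rfl
    have hLmid : ∀ i j, L i j ≤ ξ i * ((a i j * y j ^ p) ^ (1/p) * (b i j * y i ^ p) ^ (1/q)) := by
      intro i j
      have hw : (0:ℝ) ≤ ξ i * y i ^ (p-1) := mul_nonneg (hξ i).le (Real.rpow_nonneg (hy0 i) _)
      have h1 : L i j ≤ (a i j ^ (1/p) * b i j ^ (1/q)) * (ξ i * y i ^ (p-1)) * y j := by
        apply mul_le_mul_of_nonneg_right (mul_le_mul_of_nonneg_right (hVle i j) hw) (hy0 j)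
      have h2 : (a i j ^ (1/p) * b i j ^ (1/q)) * (ξ i * y i ^ (p-1)) * y j
          = ξ i * ((a i j * y j ^ p) ^ (1/p) * (b i j * y i ^ p) ^ (1/q)) := by
        rw [Real.mul_rpow (ha i j) (Real.rpow_nonneg (hy0 j) _),
          Real.mul_rpow (hb i j) (Real.rpow_nonneg (hy0 i) _),
          hpow_p_p (y j) (hy0 j), hpow_p_q (y i) (hy0 i)]
        ring
      linarith [h1, h2.le, h2.ge]
    have hmidR : ∀ i j, ξ i * ((a i j * y j ^ p) ^ (1/p) * (b i j * y i ^ p) ^ (1/q)) ≤ R i j := by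
      intro i j
      have hy1 : (0:ℝ) ≤ a i j * y j ^ p := mul_nonneg (ha i j) (Real.rpow_nonneg (hy0 j) _)
      have hy2 : (0:ℝ) ≤ b i j * y i ^ p := mul_nonneg (hb i j) (Real.rpow_nonneg (hy0 i) _)
      have h3 := young_ineq hp hq hpq hy1 hy2
      have h4 : ξ i * ((a i j * y j ^ p) ^ (1/p) * (b i j * y i ^ p) ^ (1/q))
          ≤ ξ i * ((1/p) * (a i j * y j ^ p) + (1/q) * (b i j * y i ^ p)) :=
        mul_le_mul_of_nonneg_left h3 (hξ i).le
      calc ξ i * ((a i j * y j ^ p) ^ (1/p) * (b i j * y i ^ p) ^ (1/q))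
          ≤ ξ i * ((1/p) * (a i j * y j ^ p) + (1/q) * (b i j * y i ^ p)) := h4
        _ = R i j := by rw [hRval]; ring
    have hLR : ∀ i j, L i j ≤ R i j := fun i j => le_trans (hLmid i j) (hmidR i j)
    have hchain1 : ∀ i ∈ s, c i * ξ i * y i ^ p ≤ ∑ j ∈ s.erase i, L i j := by
      intro i his
      have hw : (0:ℝ) ≤ ξ i * y i ^ (p-1) := mul_nonneg (hξ i).le (Real.rpow_nonneg (hy0 i) _)
      have h1 : (ξ i * y i ^ (p-1)) * (c i * y i)
          ≤ (ξ i * y i ^ (p-1)) * ∑ j ∈ s.erase i, V i j * y j :=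
        mul_le_mul_of_nonneg_left (hycert i his) hw
      calc c i * ξ i * y i ^ p = (ξ i * y i ^ (p-1)) * (c i * y i) := by
            rw [← hyp_pow (y i) (hy0 i)]; ring
        _ ≤ (ξ i * y i ^ (p-1)) * ∑ j ∈ s.erase i, V i j * y j := h1
        _ = ∑ j ∈ s.erase i, L i j := by
            rw [Finset.mul_sum]
            apply Finset.sum_congr rfl
            intro j _
            rw [hLval]; ring
    have hchain3 : ∑ i ∈ s, ∑ j ∈ s.erase i, R i j ≤ ∑ i ∈ s, c i * ξ i * y i ^ p := by
      have e1 : ∑ i ∈ s, ∑ j ∈ s.erase i, R i j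
          = ∑ i ∈ s, (∑ j ∈ s.erase i, (1/p) * (a j i * y i ^ p * ξ j)
            + ∑ j ∈ s.erase i, (1/q) * (b i j * y i ^ p * ξ i)) := by
        have e2 : ∑ i ∈ s, ∑ j ∈ s.erase i, R i j
            = ∑ i ∈ s, ∑ j ∈ s.erase i, (1/p) * (a i j * y j ^ p * ξ i)
              + ∑ i ∈ s, ∑ j ∈ s.erase i, (1/q) * (b i j * y i ^ p * ξ i) := by
          rw [← Finset.sum_add_distrib]
          apply Finset.sum_congr rfl
          intro i _
          rw [← Finset.sum_add_distrib]
        have e3 : ∑ i ∈ s, ∑ j ∈ s.erase i, (1/p) * (a i j * y j ^ p * ξ i)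
            = ∑ i ∈ s, ∑ j ∈ s.erase i, (1/p) * (a j i * y i ^ p * ξ j) :=
          sum_pairs_comm s (fun i j => (1/p) * (a i j * y j ^ p * ξ i))
        rw [e2, e3, ← Finset.sum_add_distrib]
      rw [e1]
      apply Finset.sum_le_sum
      intro i his
      have hyppow : (0:ℝ) ≤ y i ^ p := Real.rpow_nonneg (hy0 i) _
      have hs1 : ∑ j ∈ s.erase i, a j i * ξ j ≤ ∑ j ∈ univ.erase i, a j i * ξ j := by
        apply Finset.sum_le_sum_of_subset_of_nonneg
          (Finset.erase_subset_erase _ (Finset.subset_univ s))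
        intro j _ _
        exact mul_nonneg (ha j i) (hξ j).le
      have hs2 : ∑ j ∈ s.erase i, b i j ≤ ∑ j ∈ univ.erase i, b i j := by
        apply Finset.sum_le_sum_of_subset_of_nonneg
          (Finset.erase_subset_erase _ (Finset.subset_univ s))
        intro j _ _
        exact hb i j
      have ht1 : ((1/p) * ∑ j ∈ s.erase i, a j i * ξ j) * y i ^ p
          = ∑ j ∈ s.erase i, (1/p) * (a j i * y i ^ p * ξ j) := by
        rw [Finset.mul_sum, Finset.sum_mul]
        apply Finset.sum_congr rfl
        intro j _
        ring
      have ht2 : ((1/q) * ξ i * ∑ j ∈ s.erase i, b i j) * y i ^ p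
          = ∑ j ∈ s.erase i, (1/q) * (b i j * y i ^ p * ξ i) := by
        rw [Finset.mul_sum, Finset.sum_mul]
        apply Finset.sum_congr rfl
        intro j _
        ring
      rw [← ht1, ← ht2]
      have hkey := mul_le_mul_of_nonneg_right (hyp i) hyppow
      have hu1 : ((1/p) * ∑ j ∈ s.erase i, a j i * ξ j) * y i ^ p
          ≤ ((1/p) * ∑ j ∈ univ.erase i, a j i * ξ j) * y i ^ p := by
        apply mul_le_mul_of_nonneg_right _ hyppow
        exact mul_le_mul_of_nonneg_left hs1 hpinv.le
      have hu2 : ((1/q) * ξ i * ∑ j ∈ s.erase i, b i j) * y i ^ p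
          ≤ ((1/q) * ξ i * ∑ j ∈ univ.erase i, b i j) * y i ^ p := by
        apply mul_le_mul_of_nonneg_right _ hyppow
        exact mul_le_mul_of_nonneg_left hs2 (mul_pos hqinv (hξ i)).le
      have hexp : ((1/p) * ∑ j ∈ univ.erase i, a j i * ξ j) * y i ^ p
          + ((1/q) * ξ i * ∑ j ∈ univ.erase i, b i j) * y i ^ p ≤ (c i * ξ i) * y i ^ p := by
        calc ((1/p) * ∑ j ∈ univ.erase i, a j i * ξ j) * y i ^ p
            + ((1/q) * ξ i * ∑ j ∈ univ.erase i, b i j) * y i ^ p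
            = ((1/p) * (∑ j ∈ univ.erase i, a j i * ξ j)
              + (1/q) * ξ i * (∑ j ∈ univ.erase i, b i j)) * y i ^ p := by ring
          _ ≤ (c i * ξ i) * y i ^ p := hkey
      calc ((1/p) * ∑ j ∈ s.erase i, a j i * ξ j) * y i ^ p
          + ((1/q) * ξ i * ∑ j ∈ s.erase i, b i j) * y i ^ p
          ≤ ((1/p) * ∑ j ∈ univ.erase i, a j i * ξ j) * y i ^ p
            + ((1/q) * ξ i * ∑ j ∈ univ.erase i, b i j) * y i ^ p := by linarith
        _ ≤ (c i * ξ i) * y i ^ p := hexp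
        _ = c i * ξ i * y i ^ p := by ring
    have hchain2 : ∑ i ∈ s, ∑ j ∈ s.erase i, L i j ≤ ∑ i ∈ s, ∑ j ∈ s.erase i, R i j :=
      Finset.sum_le_sum (fun i _ => Finset.sum_le_sum (fun j _ => hLR i j))
    have hA1 : ∑ i ∈ s, c i * ξ i * y i ^ p ≤ ∑ i ∈ s, ∑ j ∈ s.erase i, L i j :=
      Finset.sum_le_sum hchain1
    have heqLR : ∑ i ∈ s, ∑ j ∈ s.erase i, L i j = ∑ i ∈ s, ∑ j ∈ s.erase i, R i j :=
      le_antisymm hchain2 (by linarith)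
    have hLReq : ∀ i ∈ s, ∀ j ∈ s.erase i, L i j = R i j := by
      have h0 : ∑ i ∈ s, (∑ j ∈ s.erase i, (R i j - L i j)) = 0 := by
        have : ∑ i ∈ s, (∑ j ∈ s.erase i, (R i j - L i j))
            = ∑ i ∈ s, ∑ j ∈ s.erase i, R i j - ∑ i ∈ s, ∑ j ∈ s.erase i, L i j := by
          rw [← Finset.sum_sub_distrib]
          apply Finset.sum_congr rfl
          intro i _
          rw [← Finset.sum_sub_distrib]
        rw [this, heqLR, sub_self]
      have h1 := (Finset.sum_eq_zero_iff_of_nonneg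
        (fun i _ => Finset.sum_nonneg (fun j _ => sub_nonneg.2 (hLR i j)))).1 h0
      intro i hi j hj
      have h2 := (Finset.sum_eq_zero_iff_of_nonneg
        (fun j _ => sub_nonneg.2 (hLR i j))).1 (h1 i hi) j hj
      linarith [h2]
    -- structural facts
    have fact_b0 : ∀ i ∈ S, ∀ j ∈ s.erase i, y j = 0 → b i j = 0 := by
      intro i hiS j hj hyj
      obtain ⟨his, hyi⟩ := (hSmem i).1 hiS
      have heq := hLReq i his j hj
      rw [hLval, hRval] at heq
      rw [hyj, Real.zero_rpow (ne_of_gt hp0)] at heq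
      have hyip : 0 < y i ^ p := Real.rpow_pos_of_pos hyi p
      rcases (hb i j).eq_or_lt with h | h
      · exact h.symm
      · exfalso
        have : (0:ℝ) < (1/q) * (b i j * y i ^ p * ξ i) :=
          mul_pos hqinv (mul_pos (mul_pos h hyip) (hξ i))
        nlinarith [heq]
    have fact_a0 : ∀ i ∈ s, y i = 0 → ∀ j ∈ s.erase i, 0 < y j → a i j = 0 := by
      intro i his hyi j hj hyj
      have heq := hLReq i his j hj
      rw [hLval, hRval] at heq
      rw [hyi, Real.zero_rpow (ne_of_gt hp1), Real.zero_rpow (ne_of_gt hp0)] at heq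
      have hyjp : 0 < y j ^ p := Real.rpow_pos_of_pos hyj p
      rcases (ha i j).eq_or_lt with h | h
      · exact h.symm
      · exfalso
        have : (0:ℝ) < (1/p) * (a i j * y j ^ p * ξ i) :=
          mul_pos hpinv (mul_pos (mul_pos h hyjp) (hξ i))
        nlinarith [heq]
    have fact3 : ∀ i ∈ S, ∀ j ∈ s.erase i, 0 < y j → a i j * y j ^ p = b i j * y i ^ p := by
      intro i hiS j hj hyj
      obtain ⟨his, hyi⟩ := (hSmem i).1 hiS
      have heq := hLReq i his j hj
      have hy1 : (0:ℝ) ≤ a i j * y j ^ p := mul_nonneg (ha i j) (Real.rpow_nonneg (hy0 j) _)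
      have hy2 : (0:ℝ) ≤ b i j * y i ^ p := mul_nonneg (hb i j) (Real.rpow_nonneg (hy0 i) _)
      have hmid_eq : ξ i * ((a i j * y j ^ p) ^ (1/p) * (b i j * y i ^ p) ^ (1/q)) = R i j := by
        have hle := hmidR i j
        have hge : R i j ≤ ξ i * ((a i j * y j ^ p) ^ (1/p) * (b i j * y i ^ p) ^ (1/q)) := by
          rw [← heq]
          exact hLmid i j
        linarith
      have hRexp : R i j = ξ i * ((1/p) * (a i j * y j ^ p) + (1/q) * (b i j * y i ^ p)) := by
        rw [hRval]; ring
      have hξne : ξ i ≠ 0 := ne_of_gt (hξ i)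
      have hyoung : (a i j * y j ^ p) ^ (1/p) * (b i j * y i ^ p) ^ (1/q)
          = (1/p) * (a i j * y j ^ p) + (1/q) * (b i j * y i ^ p) := by
        have := hmid_eq
        rw [hRexp] at this
        exact mul_left_cancel₀ hξne this
      exact young_eq hp hq hpq hy1 hy2 hyoung
    have fact4 : ∀ i ∈ S, c i ≤ ∑ j ∈ univ.erase i, b i j := by
      intro i hiS
      obtain ⟨his, hyi⟩ := (hSmem i).1 hiS
      have h2 : ∑ j ∈ s.erase i, R i j = (∑ j ∈ s.erase i, b i j) * (y i ^ p * ξ i) := by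
        rw [Finset.sum_mul]
        apply Finset.sum_congr rfl
        intro j hj
        by_cases hyj : 0 < y j
        · have h3 := fact3 i hiS j hj hyj
          rw [hRval, h3]
          linear_combination (b i j * y i ^ p * ξ i) * hpq
        · have hyj0 : y j = 0 := le_antisymm (not_lt.1 hyj) (hy0 j)
          have hb0 := fact_b0 i hiS j hj hyj0
          rw [hRval, hyj0, hb0, Real.zero_rpow (ne_of_gt hp0)]
          ring
      have h4 : c i * ξ i * y i ^ p ≤ (∑ j ∈ s.erase i, b i j) * (y i ^ p * ξ i) := by
        rw [← h2]
        calc c i * ξ i * y i ^ p ≤ ∑ j ∈ s.erase i, L i j := hchain1 i his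
          _ = ∑ j ∈ s.erase i, R i j := Finset.sum_congr rfl (fun j hj => hLReq i his j hj)
      have hpos : (0:ℝ) < y i ^ p * ξ i :=
        mul_pos (Real.rpow_pos_of_pos hyi p) (hξ i)
      have h5 : c i ≤ ∑ j ∈ s.erase i, b i j := by
        have h6 : c i * (y i ^ p * ξ i) ≤ (∑ j ∈ s.erase i, b i j) * (y i ^ p * ξ i) := by
          calc c i * (y i ^ p * ξ i) = c i * ξ i * y i ^ p := by ring
            _ ≤ _ := h4
        exact le_of_mul_le_mul_right h6 hpos
      calc c i ≤ ∑ j ∈ s.erase i, b i j := h5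
        _ ≤ ∑ j ∈ univ.erase i, b i j := by
          apply Finset.sum_le_sum_of_subset_of_nonneg
            (Finset.erase_subset_erase _ (Finset.subset_univ s))
          intro j _ _
          exact hb i j
    have fact5 : ∀ i ∈ S, ∑ j ∈ univ.erase i, a j i * ξ j ≤ c i * ξ i := by
      intro i hiS
      have h4 := fact4 i hiS
      have h5 := mul_le_mul_of_nonneg_left h4 (le_of_lt (mul_pos hqinv (hξ i)))
      have h6 := hyp i
      have h7 : (1/p) * (∑ j ∈ univ.erase i, a j i * ξ j) ≤ (1/p) * (c i * ξ i) := by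
        have h10 : (1/q) * ξ i * c i = c i * ξ i - (1/p) * (c i * ξ i) := by
          linear_combination (c i * ξ i) * hpq
        linarith [h5, h6, h10]
      exact (mul_le_mul_iff_right₀ hpinv).1 h7
    have fact6 : ∀ i ∈ S, ∀ j ∈ S, j ≠ i →
        V j i * (ξ j * y j ^ (p-1)) = a j i * ξ j * y i ^ (p-1) := by
      intro i hiS j hjS hji
      obtain ⟨his, hyi⟩ := (hSmem i).1 hiS
      obtain ⟨hjs, hyj⟩ := (hSmem j).1 hjS
      have hierase : i ∈ s.erase j := Finset.mem_erase.2 ⟨fun h => hji h.symm, his⟩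
      have heq := hLReq j hjs i hierase
      have h3 := fact3 j hjS i hierase hyi
      have hR : R j i = a j i * y i ^ p * ξ j := by
        rw [hRval, h3]
        linear_combination (b j i * y j ^ p * ξ j) * hpq
      rw [hR] at heq
      rw [hLval] at heq
      have hyine : y i ≠ 0 := ne_of_gt hyi
      apply mul_right_cancel₀ hyine
      calc V j i * (ξ j * y j ^ (p-1)) * y i = a j i * y i ^ p * ξ j := heq
        _ = a j i * ξ j * y i ^ (p-1) * y i := by rw [← hyp_pow (y i) (hy0 i)]; ring
    -- assemble the solution
    obtain ⟨χ, hχpos, hχ⟩ := ih s' hs'ss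
    refine ⟨fun i => if i ∈ S then ξ i * y i ^ (p-1) else χ i, ?_, ?_⟩
    · intro i
      beta_reduce
      by_cases hiS : i ∈ S
      · rw [if_pos hiS]
        have hyi := ((hSmem i).1 hiS).2
        have h1 := Real.rpow_pos_of_pos hyi (p-1)
        exact mul_pos (hξ i) h1
      · rw [if_neg hiS]
        exact hχpos i
    · intro i his
      beta_reduce
      by_cases hiS : i ∈ S
      · -- i ∈ S
        rw [if_pos hiS]
        have hyi := ((hSmem i).1 hiS).2
        rw [← Finset.sum_filter_add_sum_filter_not (s.erase i) (fun j => j ∈ S)]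
        have hzero : ∑ j ∈ (s.erase i).filter (fun j => ¬ j ∈ S),
            V j i * (if j ∈ S then ξ j * y j ^ (p-1) else χ j) = 0 := by
          apply Finset.sum_eq_zero
          intro j hj
          obtain ⟨hjse, hjS⟩ := Finset.mem_filter.1 hj
          have hjs : j ∈ s := Finset.mem_of_mem_erase hjse
          have hyj0 : y j = 0 := hyz j hjS
          have hinerase : i ∈ s.erase j := Finset.mem_erase.2
            ⟨fun h => (Finset.ne_of_mem_erase hjse) h.symm, his⟩
          have ha0 := fact_a0 j hjs hyj0 i hinerase hyi
          have hV0' : V j i = 0 := by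
            have h1 := hVle j i
            rw [ha0, Real.zero_rpow (ne_of_gt hpinv), zero_mul] at h1
            exact le_antisymm h1 (hV0 j i)
          rw [hV0', zero_mul]
        rw [hzero, add_zero]
        have hsum1 : ∑ j ∈ (s.erase i).filter (fun j => j ∈ S),
            V j i * (if j ∈ S then ξ j * y j ^ (p-1) else χ j)
            = ∑ j ∈ (s.erase i).filter (fun j => j ∈ S), a j i * ξ j * y i ^ (p-1) := by
          apply Finset.sum_congr rfl
          intro j hj
          obtain ⟨hjse, hjS⟩ := Finset.mem_filter.1 hj
          rw [if_pos hjS]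
          exact fact6 i hiS j hjS (Finset.ne_of_mem_erase hjse)
        rw [hsum1]
        have hsum2 : ∑ j ∈ (s.erase i).filter (fun j => j ∈ S), a j i * ξ j * y i ^ (p-1)
            = (∑ j ∈ (s.erase i).filter (fun j => j ∈ S), a j i * ξ j) * y i ^ (p-1) := by
          rw [Finset.sum_mul]
        rw [hsum2]
        have hsub : (s.erase i).filter (fun j => j ∈ S) ⊆ univ.erase i := by
          intro j hj
          obtain ⟨hjse, _⟩ := Finset.mem_filter.1 hj
          exact Finset.mem_erase.2 ⟨Finset.ne_of_mem_erase hjse, Finset.mem_univ j⟩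
        have hsum3 : ∑ j ∈ (s.erase i).filter (fun j => j ∈ S), a j i * ξ j
            ≤ ∑ j ∈ univ.erase i, a j i * ξ j := by
          apply Finset.sum_le_sum_of_subset_of_nonneg hsub
          intro j _ _
          exact mul_nonneg (ha j i) (hξ j).le
        have hpowpos : (0:ℝ) ≤ y i ^ (p-1) := Real.rpow_nonneg (hy0 i) _
        calc (∑ j ∈ (s.erase i).filter (fun j => j ∈ S), a j i * ξ j) * y i ^ (p-1)
            ≤ (∑ j ∈ univ.erase i, a j i * ξ j) * y i ^ (p-1) :=
              mul_le_mul_of_nonneg_right hsum3 hpowpos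
          _ ≤ (c i * ξ i) * y i ^ (p-1) :=
              mul_le_mul_of_nonneg_right (fact5 i hiS) hpowpos
          _ = c i * (ξ i * y i ^ (p-1)) := by ring
      · -- i ∈ s'
        rw [if_neg hiS]

        have his' : i ∈ s' := by
          rw [hs'mem]
          refine ⟨his, fun h => hiS ((hSmem i).2 ⟨his, h⟩)⟩
        have hyi0 : y i = 0 := hyz i hiS
        rw [← Finset.sum_filter_add_sum_filter_not (s.erase i) (fun j => j ∈ S)]
        have hzero : ∑ j ∈ (s.erase i).filter (fun j => j ∈ S),
            V j i * (if j ∈ S then ξ j * y j ^ (p-1) else χ j) = 0 := by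
          apply Finset.sum_eq_zero
          intro j hj
          obtain ⟨hjse, hjS⟩ := Finset.mem_filter.1 hj
          have hinerase : i ∈ s.erase j := Finset.mem_erase.2
            ⟨fun h => (Finset.ne_of_mem_erase hjse) h.symm, his⟩
          have hb0 := fact_b0 j hjS i hinerase hyi0
          have hV0' : V j i = 0 := by
            have h1 := hVle j i
            rw [hb0, Real.zero_rpow (ne_of_gt hqinv), mul_zero] at h1
            exact le_antisymm h1 (hV0 j i)
          rw [hV0', zero_mul]
        rw [hzero, zero_add]
        have hseteq : (s.erase i).filter (fun j => ¬ j ∈ S) = s'.erase i := by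
          ext j
          simp only [Finset.mem_filter, Finset.mem_erase, hs'mem, hSmem]
          constructor
          · rintro ⟨⟨hji, hjs⟩, hnS⟩
            exact ⟨hji, hjs, fun h => hnS ⟨hjs, h⟩⟩
          · rintro ⟨hji, hjs, hny⟩
            exact ⟨⟨hji, hjs⟩, fun h => hny h.2⟩
        rw [hseteq]
        have hfin : ∑ j ∈ s'.erase i, V j i * (if j ∈ S then ξ j * y j ^ (p-1) else χ j)
            = ∑ j ∈ s'.erase i, V j i * χ j := by
          apply Finset.sum_congr rfl
          intro j hj
          have hjs' : j ∈ s' := Finset.mem_of_mem_erase hj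
          have hjnS : j ∉ S := by
            rw [hs'mem] at hjs'
            rw [hSmem]
            tauto
          rw [if_neg hjnS]
        rw [hfin]
        exact hχ i his'

  · -- case B : no certificate; spectral argument
    classical
    set M : Matrix (Fin n) (Fin n) ℝ :=
      fun i j => if i ∈ s ∧ j ∈ s ∧ i ≠ j then V i j / c i else 0 with hM
    set N : Matrix (Fin n) (Fin n) ℝ :=
      fun i j => if i ∈ s ∧ j ∈ s ∧ i ≠ j then V j i / c i else 0 with hN
    have hMpos : ∀ i j, 0 ≤ M i j := by
      intro i j; rw [hM]; dsimp only
      split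
      · exact div_nonneg (hV0 i j) (hc i).le
      · exact le_rfl
    have hNpos : ∀ i j, 0 ≤ N i j := by
      intro i j; rw [hN]; dsimp only
      split
      · exact div_nonneg (hV0 j i) (hc i).le
      · exact le_rfl
    -- the no-certificate property for M
    have hno : ∀ y : Fin n → ℝ, (∀ i, 0 ≤ y i) → (∃ i, y i ≠ 0) →
        ∃ i, M.mulVec y i < y i := by
      intro y hy0 hyne
      by_contra hcon
      push_neg at hcon
      apply hA
      have hsupp : ∀ i, i ∉ s → y i = 0 := by
        intro i his
        have h1 : M.mulVec y i = 0 := by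
          rw [Matrix.mulVec, dotProduct]
          apply Finset.sum_eq_zero
          intro j _
          rw [hM]
          dsimp only
          rw [if_neg (by tauto), zero_mul]
        have := hcon i
        rw [h1] at this
        linarith [hy0 i]
      refine ⟨y, hy0, hsupp, ?_, ?_⟩
      · obtain ⟨i, hi⟩ := hyne
        exact ⟨i, lt_of_le_of_ne (hy0 i) (Ne.symm hi)⟩
      · intro i his
        have hMv : M.mulVec y i = (∑ j ∈ s.erase i, V i j * y j) / c i := by
          rw [Matrix.mulVec, dotProduct]
          rw [Finset.sum_div]
          rw [sum_erase_ite]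
          rw [← Finset.sum_subset (Finset.subset_univ s)]
          · apply Finset.sum_congr rfl
            intro j hjs
            by_cases hji : j ≠ i
            · rw [if_pos hji, hM]
              dsimp only
              rw [if_pos ⟨his, hjs, hji.symm⟩]
              ring
            · push_neg at hji
              subst hji
              simp [hM]
          · intro j _ hjs
            rw [hM]
            dsimp only
            rw [if_neg (by tauto), zero_mul]
        have h2 := hcon i
        rw [hMv] at h2
        have h3 : c i * y i ≤ c i * ((∑ j ∈ s.erase i, V i j * y j) / c i) :=
          mul_le_mul_of_nonneg_left h2 (hc i).le
        rwa [mul_div_cancel₀ _ (ne_of_gt (hc i))] at h3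
    -- determinant relation between N and M
    have hdet : ∀ μ : ℂ, ((μ • (1 : Matrix (Fin n) (Fin n) ℂ) - N.map (Complex.ofReal ·)).det = 0) →
        ((μ • (1 : Matrix (Fin n) (Fin n) ℂ) - M.map (Complex.ofReal ·)).det = 0) := by
      intro μ hμ
      set Dc : Matrix (Fin n) (Fin n) ℂ := Matrix.diagonal (fun i => (c i : ℂ)) with hDc
      set Di : Matrix (Fin n) (Fin n) ℂ := Matrix.diagonal (fun i => ((c i : ℝ)⁻¹ : ℂ)) with hDi
      have hcne : ∀ i, ((c i : ℝ) : ℂ) ≠ 0 := fun i =>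
        Complex.ofReal_ne_zero.2 (ne_of_gt (hc i))
      have hDiDc : Di * Dc = 1 := by
        rw [hDi, hDc, Matrix.diagonal_mul_diagonal]
        rw [show ((fun i => ((c i : ℝ)⁻¹ : ℂ) * ((c i : ℝ) : ℂ)) = fun _ => (1:ℂ)) from ?_]
        · exact Matrix.diagonal_one
        · funext i
          push_cast
          exact inv_mul_cancel₀ (hcne i)
      have hconj : N.map (Complex.ofReal ·) = Di * (M.map (Complex.ofReal ·))ᵀ * Dc := by
        ext i j
        have hrhs : (Di * (M.map (Complex.ofReal ·))ᵀ * Dc) i j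
            = ((c i : ℝ) : ℂ)⁻¹ * (M.map (Complex.ofReal ·))ᵀ i j * ((c j : ℝ) : ℂ) := by
          rw [hDc, hDi, Matrix.mul_diagonal, Matrix.diagonal_mul]
        rw [hrhs, Matrix.transpose_apply, Matrix.map_apply, Matrix.map_apply, hM, hN]
        dsimp only
        by_cases hcond : i ∈ s ∧ j ∈ s ∧ i ≠ j
        · rw [if_pos hcond, if_pos ⟨hcond.2.1, hcond.1, hcond.2.2.symm⟩]
          push_cast
          field_simp
          rw [mul_div_mul_right _ _ (hcne j)]
        · rw [if_neg hcond, if_neg (by tauto)]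
          push_cast
          ring
      -- now the determinant computation
      have hsm : μ • (1 : Matrix (Fin n) (Fin n) ℂ) - N.map (Complex.ofReal ·)
          = Di * (μ • (1 : Matrix (Fin n) (Fin n) ℂ) - (M.map (Complex.ofReal ·))ᵀ) * Dc := by
        rw [Matrix.mul_sub, Matrix.sub_mul, hconj]
        congr 1
        rw [Matrix.mul_smul, Matrix.smul_mul, Matrix.mul_one, hDiDc]
      have hdet2 : (μ • (1 : Matrix (Fin n) (Fin n) ℂ) - N.map (Complex.ofReal ·)).det
          = (μ • (1 : Matrix (Fin n) (Fin n) ℂ) - M.map (Complex.ofReal ·)).det := by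
        rw [hsm, Matrix.det_mul, Matrix.det_mul]
        have hdd : Di.det * Dc.det = 1 := by
          rw [← Matrix.det_mul, hDiDc, Matrix.det_one]
        have htr : (μ • (1 : Matrix (Fin n) (Fin n) ℂ) - (M.map (Complex.ofReal ·))ᵀ)
            = (μ • (1 : Matrix (Fin n) (Fin n) ℂ) - M.map (Complex.ofReal ·))ᵀ := by
          rw [Matrix.transpose_sub, Matrix.transpose_smul, Matrix.transpose_one]
        rw [htr, Matrix.det_transpose]
        linear_combination (μ • (1 : Matrix (Fin n) (Fin n) ℂ) - M.map (Complex.ofReal ·)).det * hdd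
      rw [← hdet2]
      exact hμ
    -- apply the Neumann series lemma
    obtain ⟨θ, hθ1, hθle⟩ := lemB hn M N hMpos hNpos hdet hno
    refine ⟨θ, fun i => lt_of_lt_of_le zero_lt_one (hθ1 i), ?_⟩
    intro i his
    have hNv : ∑ l, N i l * θ l = (∑ j ∈ s.erase i, V j i * θ j) / c i := by
      rw [Finset.sum_div, sum_erase_ite]
      rw [← Finset.sum_subset (Finset.subset_univ s)]
      · apply Finset.sum_congr rfl
        intro j hjs
        by_cases hji : j ≠ i
        · rw [if_pos hji, hN]
          dsimp only
          rw [if_pos ⟨his, hjs, fun h => hji (h.symm)⟩]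
          ring
        · push_neg at hji
          subst hji
          simp [hN]
      · intro j _ hjs
        rw [hN]
        dsimp only
        rw [if_neg (by tauto), zero_mul]
    have h2 := hθle i
    rw [hNv] at h2
    have h3 : (∑ j ∈ s.erase i, V j i * θ j) / c i * c i ≤ θ i * c i :=
      mul_le_mul_of_nonneg_right h2 (hc i).le
    rw [div_mul_cancel₀ _ (ne_of_gt (hc i))] at h3
    linarith [h3]

end keylemma

section assembly
variable {p q : ℝ}

lemma rpow_self_split (hp : 1 < p) (hq : 1 < q) (hpq : 1 / p + 1 / q = 1)
    {t : ℝ} (ht : 0 ≤ t) : t ^ (1/p) * t ^ (1/q) = t := by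
  have hp0 : (0:ℝ) < p := lt_trans one_pos hp
  have hq0 : (0:ℝ) < q := lt_trans one_pos hq
  rcases eq_or_lt_of_le ht with h0 | h0
  · rw [← h0, Real.zero_rpow (by positivity : (1:ℝ)/p ≠ 0),
      Real.zero_rpow (by positivity : (1:ℝ)/q ≠ 0), mul_zero]
  · rw [← Real.rpow_add h0, hpq, Real.rpow_one]

lemma holder2 (hp : 1 < p) (hq : 1 < q) (hpq : 1 / p + 1 / q = 1)
    {x1 x2 y1 y2 : ℝ} (hx1 : 0 ≤ x1) (hx2 : 0 ≤ x2) (hy1 : 0 ≤ y1) (hy2 : 0 ≤ y2) :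
    x1 ^ (1/p) * y1 ^ (1/q) + x2 ^ (1/p) * y2 ^ (1/q)
      ≤ (x1 + x2) ^ (1/p) * (y1 + y2) ^ (1/q) := by
  have hp0 : (0:ℝ) < p := lt_trans one_pos hp
  have hq0 : (0:ℝ) < q := lt_trans one_pos hq
  have hpq' : Real.HolderConjugate p q := ⟨by simpa [one_div] using hpq, hp0, hq0⟩
  have hf : ∀ i ∈ (univ : Finset (Fin 2)), (0:ℝ) ≤ ![x1 ^ (1/p), x2 ^ (1/p)] i := by
    intro i _
    fin_cases i <;> simp <;> positivity
  have hg : ∀ i ∈ (univ : Finset (Fin 2)), (0:ℝ) ≤ ![y1 ^ (1/q), y2 ^ (1/q)] i := by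
    intro i _
    fin_cases i <;> simp <;> positivity
  have h := Real.inner_le_Lp_mul_Lq_of_nonneg (s := (univ : Finset (Fin 2)))
    (f := ![x1 ^ (1/p), x2 ^ (1/p)]) (g := ![y1 ^ (1/q), y2 ^ (1/q)]) hpq' hf hg
  rw [Fin.sum_univ_two, Fin.sum_univ_two, Fin.sum_univ_two] at h
  simp only [Matrix.cons_val_zero, Matrix.cons_val_one, Matrix.head_cons] at h
  have ep : ∀ t : ℝ, 0 ≤ t → (t ^ ((1:ℝ)/p)) ^ p = t := by
    intro t ht
    rw [← Real.rpow_mul ht, one_div_mul_cancel (ne_of_gt hp0), Real.rpow_one]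
  have eq' : ∀ t : ℝ, 0 ≤ t → (t ^ ((1:ℝ)/q)) ^ q = t := by
    intro t ht
    rw [← Real.rpow_mul ht, one_div_mul_cancel (ne_of_gt hq0), Real.rpow_one]
  rw [ep x1 hx1, ep x2 hx2, eq' y1 hy1, eq' y2 hy2] at h
  exact h

end assembly

lemma geom_pair (hp : 1 < p) (hq : 1 < q) (hpq : 1 / p + 1 / q = 1)
    {t w γ : ℝ} (ht : 0 ≤ t) (hw : 0 ≤ w) :
    (t ^ (γ * p) * w) ^ (1/p) * (t ^ ((1 - γ) * q) * w) ^ (1/q) = t * w := by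
  have hp0 : (0:ℝ) < p := lt_trans one_pos hp
  have hq0 : (0:ℝ) < q := lt_trans one_pos hq
  have hpinv : (0:ℝ) < 1/p := by positivity
  have hqinv : (0:ℝ) < 1/q := by positivity
  rcases eq_or_lt_of_le ht with h0 | h0
  · -- t = 0
    rw [← h0]
    by_cases hγ : γ * p = 0
    · have hγ0 : γ = 0 := by
        rcases mul_eq_zero.1 hγ with h | h
        · exact h
        · exact absurd h (ne_of_gt hp0)
      have hne : (1 - γ) * q ≠ 0 := by
        rw [hγ0]
        simp [ne_of_gt hq0]
      rw [Real.zero_rpow hne, zero_mul, Real.zero_rpow (ne_of_gt hqinv), mul_zero]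
    · rw [Real.zero_rpow hγ, zero_mul, Real.zero_rpow (ne_of_gt hpinv), zero_mul]
  · -- t > 0
    rw [Real.mul_rpow (Real.rpow_nonneg h0.le _) hw, Real.mul_rpow (Real.rpow_nonneg h0.le _) hw,
      ← Real.rpow_mul h0.le, ← Real.rpow_mul h0.le]
    have e1 : γ * p * (1/p) = γ := by field_simp
    have e2 : (1 - γ) * q * (1/q) = 1 - γ := by field_simp
    rw [e1, e2]
    have e3 : t ^ γ * t ^ (1 - γ) = t := by
      rw [← Real.rpow_add h0]
      norm_num
    have e4 : w ^ (1/p) * w ^ (1/q) = w := rpow_self_split hp hq hpq hw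
    calc t ^ γ * w ^ (1/p) * (t ^ (1-γ) * w ^ (1/q))
        = (t ^ γ * t ^ (1-γ)) * (w ^ (1/p) * w ^ (1/q)) := by ring
      _ = t * w := by rw [e3, e4]


end Aux

open Real Finset

/-- Theorem 4: the `L^p`-type criterion with parameters `α, β` implies the `L¹`-type criterion. -/
theorem theorem4
    (n : ℕ) (hn : 1 ≤ n)
    (c G F : Fin n → ℝ) (hc : ∀ i, 0 < c i) (hG : ∀ i, 0 < G i) (hF : ∀ i, 0 < F i)
    (C D E : Fin n → Fin n → ℝ)
    (hC : ∀ i j, 0 ≤ C i j) (hD : ∀ i j, 0 ≤ D i j) (hE : ∀ i j, 0 ≤ E i j)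
    (ξ : Fin n → ℝ) (hξ : ∀ i, 0 < ξ i)
    (α β : Fin n → Fin n → ℝ)
    (p q : ℝ) (hp : 1 < p) (hq : 1 < q) (hpq : 1 / p + 1 / q = 1)
    (hineq : ∀ i,
      -c i * ξ i
        + (1 / p) * ∑ j ∈ univ.erase i, C j i ^ (α j i * p) * G i * ξ j
        + (1 / q) * ∑ j ∈ univ.erase i, C i j ^ ((1 - α i j) * q) * G j * ξ i
        + (1 / p) * ∑ j ∈ univ.erase i, D j i ^ (β j i * p) * E j i * F i * ξ j
        + (1 / q) * ∑ j ∈ univ.erase i, D i j ^ ((1 - β i j) * q) * E i j * F j * ξ i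
        ≤ 0) :
    ∃ θ : Fin n → ℝ, (∀ i, 0 < θ i) ∧ ∀ i,
      -c i * θ i + G i * ∑ j ∈ univ.erase i, θ j * C j i
        + F i * ∑ j ∈ univ.erase i, θ j * D j i * E j i ≤ 0 := by
  set a : Fin n → Fin n → ℝ :=
    fun i j => C i j ^ (α i j * p) * G j + D i j ^ (β i j * p) * E i j * F j with hadef
  set b : Fin n → Fin n → ℝ :=
    fun i j => C i j ^ ((1 - α i j) * q) * G j + D i j ^ ((1 - β i j) * q) * E i j * F j with hbdef
  set V : Fin n → Fin n → ℝ := fun i j => C i j * G j + D i j * E i j * F j with hVdef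
  have ha : ∀ i j, 0 ≤ a i j := by
    intro i j
    apply add_nonneg
    · exact mul_nonneg (Real.rpow_nonneg (hC i j) _) (hG j).le
    · exact mul_nonneg (mul_nonneg (Real.rpow_nonneg (hD i j) _) (hE i j)) (hF j).le
  have hb : ∀ i j, 0 ≤ b i j := by
    intro i j
    apply add_nonneg
    · exact mul_nonneg (Real.rpow_nonneg (hC i j) _) (hG j).le
    · exact mul_nonneg (mul_nonneg (Real.rpow_nonneg (hD i j) _) (hE i j)) (hF j).le
  have hV0 : ∀ i j, 0 ≤ V i j := by
    intro i j
    apply add_nonneg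
    · exact mul_nonneg (hC i j) (hG j).le
    · exact mul_nonneg (mul_nonneg (hD i j) (hE i j)) (hF j).le
  have hVle : ∀ i j, V i j ≤ a i j ^ (1/p) * b i j ^ (1/q) := by
    intro i j
    have h1 : C i j * G j
        = (C i j ^ (α i j * p) * G j) ^ (1/p) * (C i j ^ ((1 - α i j) * q) * G j) ^ (1/q) :=
      (geom_pair hp hq hpq (hC i j) (hG j).le).symm
    have h2 : D i j * (E i j * F j)
        = (D i j ^ (β i j * p) * (E i j * F j)) ^ (1/p)
          * (D i j ^ ((1 - β i j) * q) * (E i j * F j)) ^ (1/q) :=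
      (geom_pair hp hq hpq (hD i j) (mul_nonneg (hE i j) (hF j).le)).symm
    have h3 := holder2 hp hq hpq
      (x1 := C i j ^ (α i j * p) * G j) (x2 := D i j ^ (β i j * p) * (E i j * F j))
      (y1 := C i j ^ ((1 - α i j) * q) * G j) (y2 := D i j ^ ((1 - β i j) * q) * (E i j * F j))
      (mul_nonneg (Real.rpow_nonneg (hC i j) _) (hG j).le)
      (mul_nonneg (Real.rpow_nonneg (hD i j) _) (mul_nonneg (hE i j) (hF j).le))
      (mul_nonneg (Real.rpow_nonneg (hC i j) _) (hG j).le)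
      (mul_nonneg (Real.rpow_nonneg (hD i j) _) (mul_nonneg (hE i j) (hF j).le))
    calc V i j = C i j * G j + D i j * (E i j * F j) := by rw [hVdef]; ring
      _ = (C i j ^ (α i j * p) * G j) ^ (1/p) * (C i j ^ ((1 - α i j) * q) * G j) ^ (1/q)
          + (D i j ^ (β i j * p) * (E i j * F j)) ^ (1/p)
            * (D i j ^ ((1 - β i j) * q) * (E i j * F j)) ^ (1/q) := by rw [← h1, ← h2]
      _ ≤ (C i j ^ (α i j * p) * G j + D i j ^ (β i j * p) * (E i j * F j)) ^ (1/p)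
          * (C i j ^ ((1 - α i j) * q) * G j + D i j ^ ((1 - β i j) * q) * (E i j * F j)) ^ (1/q) :=
        h3
      _ = a i j ^ (1/p) * b i j ^ (1/q) := by rw [hadef, hbdef]; ring_nf
  have hyp : ∀ i, (1/p) * (∑ j ∈ univ.erase i, a j i * ξ j)
      + (1/q) * ξ i * (∑ j ∈ univ.erase i, b i j) ≤ c i * ξ i := by
    intro i
    have e1 : ∑ j ∈ univ.erase i, a j i * ξ j
        = (∑ j ∈ univ.erase i, C j i ^ (α j i * p) * G i * ξ j)
          + (∑ j ∈ univ.erase i, D j i ^ (β j i * p) * E j i * F i * ξ j) := by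
      rw [← Finset.sum_add_distrib]
      apply Finset.sum_congr rfl
      intro j _
      rw [hadef]
      ring
    have e2 : ξ i * (∑ j ∈ univ.erase i, b i j)
        = (∑ j ∈ univ.erase i, C i j ^ ((1 - α i j) * q) * G j * ξ i)
          + (∑ j ∈ univ.erase i, D i j ^ ((1 - β i j) * q) * E i j * F j * ξ i) := by
      rw [Finset.mul_sum, ← Finset.sum_add_distrib]
      apply Finset.sum_congr rfl
      intro j _
      rw [hbdef]
      ring
    have e1' : (1/p) * (∑ j ∈ univ.erase i, a j i * ξ j)
        = (1/p) * (∑ j ∈ univ.erase i, C j i ^ (α j i * p) * G i * ξ j)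
          + (1/p) * (∑ j ∈ univ.erase i, D j i ^ (β j i * p) * E j i * F i * ξ j) := by
      rw [e1]; ring
    have e2' : (1/q) * ξ i * (∑ j ∈ univ.erase i, b i j)
        = (1/q) * (∑ j ∈ univ.erase i, C i j ^ ((1 - α i j) * q) * G j * ξ i)
          + (1/q) * (∑ j ∈ univ.erase i, D i j ^ ((1 - β i j) * q) * E i j * F j * ξ i) := by
      rw [mul_assoc, e2]; ring
    linarith [hineq i, e1', e2']
  obtain ⟨θ, hθpos, hθ⟩ := key hn p q hp hq hpq a b V c ξ ha hb hc hξ hV0 hVle hyp univ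
  refine ⟨θ, hθpos, ?_⟩
  intro i
  have h1 := hθ i (Finset.mem_univ i)
  have h2 : G i * (∑ j ∈ univ.erase i, θ j * C j i)
      + F i * (∑ j ∈ univ.erase i, θ j * D j i * E j i)
      = ∑ j ∈ univ.erase i, V j i * θ j := by
    rw [Finset.mul_sum, Finset.mul_sum, ← Finset.sum_add_distrib]
    apply Finset.sum_congr rfl
    intro j _
    rw [hVdef]
    ring
  linarith [h1, h2]
end

section
/- Theorem 6: Let n ≥ 1, let p > 1, q > 1 with 1/p + 1/q = 1, and let d_i, G_i > 0, F_i > 0, τ_{ij} ≥ 0 and a_{ij}, b_{ij} (i,j = 1,…,n) be real numbers. Suppose there exist positive constants ε, ξ_i and real constants α_{ij}, β_{ij} such that for every i at least one of the following holds: (A) (−d_i + ε)ξ_i + G_i[ξ_i|a_{ii}| + (1/p)Σ_{j≠i} ξ_j |a_{ji}|^{α_{ji}p}] + (1/q)ξ_i Σ_{j≠i} G_j |a_{ij}|^{(1−α_{ij})q} + (1/p)F_i Σ_{j=1}^n ξ_j |b_{ji}|^{β_{ji}p} e^{ε τ_{ji}} + (1/q)ξ_i Σ_{j=1}^n F_j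 |b_{ij}|^{(1−β_{ij})q} e^{ε τ_{ij}} ≤ 0 for all i; or (B) the same with α_{ij} = β_{ij} = 1/p, i.e. (−d_i + ε)ξ_i + G_i[ξ_i|a_{ii}| + (1/p)Σ_{j≠i} ξ_j |a_{ji}|] + (1/q)ξ_i Σ_{j≠i} G_j |a_{ij}| + (1/p)F_i Σ_{j=1}^n ξ_j |b_{ji}| e^{ε τ_{ji}} + (1/q)ξ_i Σ_{j=1}^n F_j |b_{ij}| e^{ε τ_{ij}} ≤ 0 for all i. Then there exist constants θ_i > 0 such that for every i: (−d_i + ε)θ_i + G_i[θ_i|a_{ii}| + Σ_{j≠i} θ_j |a_{ji}|] + F_i Σ_{j=1}^n θ_j |b_{ji}| e^{ε τ_{ji}} ≤ 0. -/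
open Real Finset



section aux
variable {p q : ℝ}

lemma young' (hp : 1 < p) (hq : 1 < q) (hpq : 1 / p + 1 / q = 1)
    {x y : ℝ} (hx : 0 ≤ x) (hy : 0 ≤ y) :
    (p * x) ^ (1 / p) * (q * y) ^ (1 / q) ≤ x + y := by
  have hp0 : (0:ℝ) < p := by linarith
  have hq0 : (0:ℝ) < q := by linarith
  have h := Real.geom_mean_le_arith_mean2_weighted
    (by positivity : (0:ℝ) ≤ 1/p) (by positivity : (0:ℝ) ≤ 1/q)
    (by positivity : (0:ℝ) ≤ p * x) (by positivity : (0:ℝ) ≤ q * y) hpq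
  calc (p * x) ^ (1 / p) * (q * y) ^ (1 / q) ≤ 1/p * (p*x) + 1/q * (q*y) := h
    _ = x + y := by field_simp

lemma holder2_s11 (hp : 1 < p) (hq : 1 < q) (hpq : 1 / p + 1 / q = 1)
    {a b c d : ℝ} (ha : 0 ≤ a) (hb : 0 ≤ b) (hc : 0 ≤ c) (hd : 0 ≤ d) :
    a ^ (1/p) * b ^ (1/q) + c ^ (1/p) * d ^ (1/q) ≤ (a+c) ^ (1/p) * (b+d) ^ (1/q) := by
  have hp0 : (0:ℝ) < p := by linarith
  have hq0 : (0:ℝ) < q := by linarith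
  have hpne : (1/p : ℝ) ≠ 0 := by positivity
  have hqne : (1/q : ℝ) ≠ 0 := by positivity
  rcases eq_or_lt_of_le (by linarith : (0:ℝ) ≤ a + c) with hs | hs
  · have ha0 : a = 0 := by linarith
    have hc0 : c = 0 := by linarith
    rw [ha0, hc0]
    simp [Real.zero_rpow, inv_ne_zero (ne_of_gt hp0), inv_ne_zero (ne_of_gt hq0)]
  rcases eq_or_lt_of_le (by linarith : (0:ℝ) ≤ b + d) with ht | ht
  · have hb0 : b = 0 := by linarith
    have hd0 : d = 0 := by linarith
    rw [hb0, hd0]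
    simp [Real.zero_rpow, inv_ne_zero (ne_of_gt hp0), inv_ne_zero (ne_of_gt hq0)]
  have key : ∀ x y : ℝ, 0 ≤ x → 0 ≤ y →
      x ^ (1/p) * y ^ (1/q) ≤ (a+c) ^ (1/p) * (b+d) ^ (1/q) * (x/(a+c)/p + y/(b+d)/q) := by
    intro x y hx hy
    have h1 : x ^ (1/p) = (a+c) ^ (1/p) * (x/(a+c)) ^ (1/p) := by
      rw [← Real.mul_rpow (le_of_lt hs) (by positivity)]
      rw [mul_div_cancel₀ _ (ne_of_gt hs)]
    have h2 : y ^ (1/q) = (b+d) ^ (1/q) * (y/(b+d)) ^ (1/q) := by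
      rw [← Real.mul_rpow (le_of_lt ht) (by positivity)]
      rw [mul_div_cancel₀ _ (ne_of_gt ht)]
    rw [h1, h2]
    have h3 := Real.geom_mean_le_arith_mean2_weighted
      (by positivity : (0:ℝ) ≤ 1/p) (by positivity : (0:ℝ) ≤ 1/q)
      (by positivity : (0:ℝ) ≤ x/(a+c)) (by positivity : (0:ℝ) ≤ y/(b+d)) hpq
    have hnn : (0:ℝ) ≤ (a+c) ^ (1/p) * (b+d) ^ (1/q) := by positivity
    calc (a+c) ^ (1/p) * (x/(a+c)) ^ (1/p) * ((b+d) ^ (1/q) * (y/(b+d)) ^ (1/q))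
        = (a+c) ^ (1/p) * (b+d) ^ (1/q) * ((x/(a+c)) ^ (1/p) * (y/(b+d)) ^ (1/q)) := by ring
      _ ≤ (a+c) ^ (1/p) * (b+d) ^ (1/q) * (1/p * (x/(a+c)) + 1/q * (y/(b+d))) := by
          exact mul_le_mul_of_nonneg_left h3 hnn
      _ = (a+c) ^ (1/p) * (b+d) ^ (1/q) * (x/(a+c)/p + y/(b+d)/q) := by ring
  have k1 := key a b ha hb
  have k2 := key c d hc hd
  have hpq' : p + q = p * q := by
    field_simp at hpq
    linarith
  have hsum : a/(a+c)/p + b/(b+d)/q + (c/(a+c)/p + d/(b+d)/q) = 1 := by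
    field_simp
    linear_combination ((a+c)*(b+d)) * hpq'
  calc a ^ (1/p) * b ^ (1/q) + c ^ (1/p) * d ^ (1/q)
      ≤ (a+c) ^ (1/p) * (b+d) ^ (1/q) * (a/(a+c)/p + b/(b+d)/q)
        + (a+c) ^ (1/p) * (b+d) ^ (1/q) * (c/(a+c)/p + d/(b+d)/q) := add_le_add k1 k2
    _ = (a+c) ^ (1/p) * (b+d) ^ (1/q) * (a/(a+c)/p + b/(b+d)/q + (c/(a+c)/p + d/(b+d)/q)) := by ring
    _ = (a+c) ^ (1/p) * (b+d) ^ (1/q) := by rw [hsum, mul_one]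
end aux



lemma helperT {ι : Type*} (s : Finset ι) (f g : ι → ℝ)
    (hf : ∀ i ∈ s, 0 ≤ f i) (hg : ∀ i ∈ s, 0 ≤ g i)
    (hfg : ∀ i ∈ s, f i ≠ 0 → 0 < g i) :
    ∃ t : ℝ, 0 < t ∧ ∀ i ∈ s, f i * t ≤ g i := by
  classical
  induction s using Finset.cons_induction with
  | empty => exact ⟨1, one_pos, fun i hi => absurd hi (Finset.notMem_empty i)⟩
  | cons a s ha ih =>
    obtain ⟨t, ht, hts⟩ := ih (fun i hi => hf i (Finset.mem_cons_of_mem hi))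
      (fun i hi => hg i (Finset.mem_cons_of_mem hi))
      (fun i hi => hfg i (Finset.mem_cons_of_mem hi))
    by_cases hfa : f a = 0
    · refine ⟨t, ht, fun i hi => ?_⟩
      rcases Finset.mem_cons.1 hi with rfl | hi
      · rw [hfa, zero_mul]; exact hg i (Finset.mem_cons_self i s)
      · exact hts i hi
    · have hfa0 : 0 < f a := lt_of_le_of_ne (hf a (Finset.mem_cons_self a s)) (Ne.symm hfa)
      have hga : 0 < g a := hfg a (Finset.mem_cons_self a s) hfa
      refine ⟨min t (g a / f a), lt_min ht (by positivity), fun i hi => ?_⟩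
      rcases Finset.mem_cons.1 hi with rfl | hi
      · calc f i * min t (g i / f i) ≤ f i * (g i / f i) :=
            mul_le_mul_of_nonneg_left (min_le_right _ _) hfa0.le
          _ = g i := by field_simp
      · calc f i * min t (g a / f a) ≤ f i * t :=
            mul_le_mul_of_nonneg_left (min_le_left _ _) (hf i (Finset.mem_cons_of_mem hi))
          _ ≤ g i := hts i hi


section keysec
variable {ι : Type*} [DecidableEq ι] {p q : ℝ}

set_option maxHeartbeats 1000000 in
lemma keyM (hp : 1 < p) (hq : 1 < q) (hpq : 1 / p + 1 / q = 1) (s : Finset ι) :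
    ∀ (P Q : ι → ι → ℝ) (c : ι → ℝ) (R : ι → ι → ℝ),
    (∀ i j, R i j = (p * P i j) ^ (1/p) * (q * Q j i) ^ (1/q)) →
    (∀ i j, 0 ≤ P i j) → (∀ i j, 0 ≤ Q i j) →
    (∀ i ∈ s, ∑ j ∈ s, (P i j + Q i j) ≤ c i) →
    ∃ w : ι → ℝ, (∀ i ∈ s, 0 < w i) ∧ ∀ i ∈ s,
      (∑ j ∈ s, R i j * w j ≤ c i * w i) ∧
      ((∑ j ∈ s, (P i j + Q i j)) < c i → ∑ j ∈ s, R i j * w j < c i * w i) := by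
  have hp0 : (0:ℝ) < p := by linarith
  have hq0 : (0:ℝ) < q := by linarith
  have hpne : (1/p : ℝ) ≠ 0 := by positivity
  have hqne : (1/q : ℝ) ≠ 0 := by positivity
  induction s using Finset.cons_induction with
  | empty =>
    intro P Q c R _ _ _ _
    exact ⟨fun _ => 1, fun i hi => absurd hi (Finset.notMem_empty i),
      fun i hi => absurd hi (Finset.notMem_empty i)⟩
  | cons a s ha ih =>
    intro P Q c R hRdef hP hQ hbud
    classical
    have hR0 : ∀ i j, 0 ≤ R i j := fun i j => by
      rw [hRdef]
      exact mul_nonneg (Real.rpow_nonneg (mul_nonneg hp0.le (hP i j)) _)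
        (Real.rpow_nonneg (mul_nonneg hq0.le (hQ j i)) _)
    have hyoung : ∀ i j, R i j ≤ P i j + Q j i := fun i j => by
      rw [hRdef]; exact young' hp hq hpq (hP i j) (hQ j i)
    have hRP : ∀ i j, P i j = 0 → R i j = 0 := by
      intro i j h; rw [hRdef, h, mul_zero, Real.zero_rpow hpne, zero_mul]
    have hRQ : ∀ i j, Q j i = 0 → R i j = 0 := by
      intro i j h; rw [hRdef, h, mul_zero, Real.zero_rpow hqne, mul_zero]
    have hPR : ∀ i j, R i j ≠ 0 → 0 < P i j := by
      intro i j h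
      rcases eq_or_lt_of_le (hP i j) with h' | h'
      · exact absurd (hRP i j h'.symm) h
      · exact h'
    have hQR : ∀ i j, R i j ≠ 0 → 0 < Q j i := by
      intro i j h
      rcases eq_or_lt_of_le (hQ j i) with h' | h'
      · exact absurd (hRQ i j h'.symm) h
      · exact h'
    have hba : (P a a + Q a a) + ∑ j ∈ s, (P a j + Q a j) ≤ c a := by
      have := hbud a (Finset.mem_cons_self a s)
      rwa [Finset.sum_cons] at this
    have hsplit : ∑ j ∈ s, (P a j + Q a j) = (∑ j ∈ s, P a j) + ∑ j ∈ s, Q a j :=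
      Finset.sum_add_distrib
    have hσP0 : 0 ≤ ∑ j ∈ s, P a j := Finset.sum_nonneg fun j _ => hP a j
    have hσQ0 : 0 ≤ ∑ j ∈ s, Q a j := Finset.sum_nonneg fun j _ => hQ a j
    have hbud_s' : ∀ i ∈ s, (∑ j ∈ s, (P i j + Q i j)) + (P i a + Q i a) ≤ c i := by
      intro i hi
      have := hbud i (Finset.mem_cons_of_mem hi)
      rw [Finset.sum_cons] at this
      linarith
    have hbud_s : ∀ i ∈ s, ∑ j ∈ s, (P i j + Q i j) ≤ c i := fun i hi => by
      have := hbud_s' i hi; have := hP i a; have := hQ i a; linarith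
    have hcaa : R a a ≤ c a := by
      have h1 := hyoung a a
      have h2 := hsplit ▸ hba
      linarith
    by_cases hout : ∀ j ∈ s, R a j = 0
    · -- CASE α : no outgoing edges from a
      obtain ⟨w, hwpos, hw⟩ := ih P Q c R hRdef hP hQ hbud_s
      have hgap0 : ∀ i ∈ s, 0 ≤ c i * w i - ∑ j ∈ s, R i j * w j := fun i hi => by
        linarith [(hw i hi).1]
      have hgappos : ∀ i ∈ s, R i a ≠ 0 → 0 < c i * w i - ∑ j ∈ s, R i j * w j := by
        intro i hi hne
        have hPia := hPR i a hne
        have hstrict : ∑ j ∈ s, (P i j + Q i j) < c i := by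
          have := hbud_s' i hi; have := hQ i a; linarith
        linarith [(hw i hi).2 hstrict]
      obtain ⟨t, ht0, htle⟩ := helperT s (fun i => R i a)
        (fun i => (c i * w i - ∑ j ∈ s, R i j * w j) / 2)
        (fun i _ => hR0 i a) (fun i hi => by linarith [hgap0 i hi])
        (fun i hi hne => by linarith [hgappos i hi hne])
      set w' : ι → ℝ := fun i => if i = a then t else w i with hw'def
      have hWa : w' a = t := by simp [hw'def]
      have hWs : ∀ j ∈ s, w' j = w j := fun j hj => by
        simp only [hw'def]; rw [if_neg (by rintro rfl; exact ha hj)]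
      refine ⟨w', ?_, ?_⟩
      · intro i hi
        rcases Finset.mem_cons.1 hi with rfl | hi
        · rw [hWa]; exact ht0
        · rw [hWs i hi]; exact hwpos i hi
      · intro i hi
        rcases Finset.mem_cons.1 hi with rfl | hi
        · rw [Finset.sum_cons, hWa]
          have hsum0 : ∑ j ∈ s, R i j * w' j = 0 :=
            Finset.sum_eq_zero fun j hj => by rw [hout j hj, zero_mul]
          rw [hsum0, add_zero]
          constructor
          · exact mul_le_mul_of_nonneg_right hcaa ht0.le
          · intro hlt
            rw [Finset.sum_cons] at hlt
            have h1 : P i i + Q i i < c i := by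
              have hnn : (0:ℝ) ≤ ∑ j ∈ s, (P i j + Q i j) :=
                Finset.sum_nonneg fun j _ => by have := hP i j; have := hQ i j; linarith
              linarith
            exact mul_lt_mul_of_pos_right (lt_of_le_of_lt (hyoung i i) h1) ht0
        · rw [Finset.sum_cons, hWa, hWs i hi]
          have hsC : ∑ j ∈ s, R i j * w' j = ∑ j ∈ s, R i j * w j :=
            Finset.sum_congr rfl fun j hj => by rw [hWs j hj]
          rw [hsC]
          have h2 := htle i hi
          constructor
          · linarith [hgap0 i hi]
          · intro hlt
            rw [Finset.sum_cons] at hlt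
            have hstrict : ∑ j ∈ s, (P i j + Q i j) < c i := by
              have := hP i a; have := hQ i a; linarith
            have := (hw i hi).2 hstrict
            linarith
    · -- CASE β : some outgoing edge from a
      push_neg at hout
      obtain ⟨j₀, hj₀s, hj₀⟩ := hout
      have hPaj₀ : 0 < P a j₀ := hPR a j₀ hj₀
      have hσP : 0 < ∑ j ∈ s, P a j :=
        Finset.sum_pos' (fun j _ => hP a j) ⟨j₀, hj₀s, hPaj₀⟩
      have hDge : (∑ j ∈ s, P a j) + (∑ j ∈ s, Q a j) ≤ c a - R a a := by
        have h1 := hyoung a a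
        have h2 := hsplit ▸ hba
        linarith
      have hD0 : 0 < c a - R a a := lt_of_lt_of_le (by linarith) hDge
      have hEchain : (p * ∑ j ∈ s, P a j) ^ (1/p) * (q * ∑ j ∈ s, Q a j) ^ (1/q) + R a a
          ≤ (P a a + Q a a) + ((∑ j ∈ s, P a j) + ∑ j ∈ s, Q a j) := by
        have h2 := holder2_s11 hp hq hpq
          (mul_nonneg hp0.le hσP0) (mul_nonneg hq0.le hσQ0)
          (mul_nonneg hp0.le (hP a a)) (mul_nonneg hq0.le (hQ a a))
        have e1 : p * (∑ j ∈ s, P a j) + p * P a a = p * ((∑ j ∈ s, P a j) + P a a) := by ring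
        have e2 : q * (∑ j ∈ s, Q a j) + q * Q a a = q * ((∑ j ∈ s, Q a j) + Q a a) := by ring
        rw [e1, e2] at h2
        have h3 := young' hp hq hpq
          (add_nonneg hσP0 (hP a a)) (add_nonneg hσQ0 (hQ a a))
        rw [hRdef a a]
        linarith
      have hED : (p * ∑ j ∈ s, P a j) ^ (1/p) * (q * ∑ j ∈ s, Q a j) ^ (1/q)
          ≤ c a - R a a := by
        have h2 := hsplit ▸ hba
        linarith
      by_cases hsQ : ∑ j ∈ s, Q a j = 0
      · -- β1 : no Q-mass in row a, hence no incoming edges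
        have hQa0 : ∀ j ∈ s, Q a j = 0 :=
          (Finset.sum_eq_zero_iff_of_nonneg (fun j _ => hQ a j)).1 hsQ
        have hRin0 : ∀ i ∈ s, R i a = 0 := fun i hi => hRQ i a (hQa0 i hi)
        obtain ⟨w, hwpos, hw⟩ := ih P Q c R hRdef hP hQ hbud_s
        have hA0 : 0 ≤ ∑ j ∈ s, R a j * w j :=
          Finset.sum_nonneg fun j hj => mul_nonneg (hR0 a j) (hwpos j hj).le
        set A := ∑ j ∈ s, R a j * w j with hAdef
        set w' : ι → ℝ := fun i => if i = a then A / (c a - R a a) + 1 else w i with hw'def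
        have hWa : w' a = A / (c a - R a a) + 1 := by simp [hw'def]
        have hWs : ∀ j ∈ s, w' j = w j := fun j hj => by
          simp only [hw'def]; rw [if_neg (by rintro rfl; exact ha hj)]
        have hWapos : 0 < w' a := by
          rw [hWa]; have := div_nonneg hA0 hD0.le; linarith
        refine ⟨w', ?_, ?_⟩
        · intro i hi
          rcases Finset.mem_cons.1 hi with rfl | hi
          · exact hWapos
          · rw [hWs i hi]; exact hwpos i hi
        · intro i hi
          rcases Finset.mem_cons.1 hi with rfl | hi
          · rw [Finset.sum_cons]
            have hsC : ∑ j ∈ s, R i j * w' j = A :=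
              Finset.sum_congr rfl fun j hj => by rw [hWs j hj]
            rw [hsC, hWa]
            have e : (c i - R i i) * (A / (c i - R i i)) = A := by
              field_simp
            have hstrict : R i i * (A / (c i - R i i) + 1) + A
                < c i * (A / (c i - R i i) + 1) := by nlinarith
            exact ⟨hstrict.le, fun _ => hstrict⟩
          · rw [Finset.sum_cons, hWs i hi]
            have hsC : ∑ j ∈ s, R i j * w' j = ∑ j ∈ s, R i j * w j :=
              Finset.sum_congr rfl fun j hj => by rw [hWs j hj]
            rw [hsC, hRin0 i hi, zero_mul, zero_add]
            refine ⟨(hw i hi).1, fun hlt => ?_⟩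
            rw [Finset.sum_cons] at hlt
            have hstrict : ∑ j ∈ s, (P i j + Q i j) < c i := by
              have := hP i a; have := hQ i a; linarith
            exact (hw i hi).2 hstrict
      · -- β2 : Schur complement transfer
        have hσQ : 0 < ∑ j ∈ s, Q a j := lt_of_le_of_ne hσQ0 (Ne.symm hsQ)
        set sP := ∑ j ∈ s, P a j with hsPdef
        set sQ := ∑ j ∈ s, Q a j with hsQdef
        set D := c a - R a a with hDdef
        set E := (p * sP) ^ (1/p) * (q * sQ) ^ (1/q) with hEdef
        have hE0 : 0 < E :=
          mul_pos (Real.rpow_pos_of_pos (mul_pos hp0 hσP) _)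
            (Real.rpow_pos_of_pos (mul_pos hq0 hσQ) _)
        have hDE : 0 < D / E := div_pos hD0 hE0
        set s0 := p * sP * (D / E) with hs0def
        set t0 := q * sQ * (D / E) with ht0def
        have hs00 : 0 < s0 := mul_pos (mul_pos hp0 hσP) hDE
        have ht00 : 0 < t0 := mul_pos (mul_pos hq0 hσQ) hDE
        have hst : s0 ^ (1/p) * t0 ^ (1/q) = D := by
          rw [hs0def, ht0def, Real.mul_rpow (mul_nonneg hp0.le hσP0) hDE.le,
            Real.mul_rpow (mul_nonneg hq0.le hσQ0) hDE.le]
          have e : (p * sP) ^ (1/p) * (D / E) ^ (1/p) * ((q * sQ) ^ (1/q) * (D / E) ^ (1/q))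
              = E * ((D / E) ^ (1/p) * (D / E) ^ (1/q)) := by rw [hEdef]; ring
          rw [e, ← Real.rpow_add hDE, hpq, Real.rpow_one]
          field_simp
        set P' : ι → ι → ℝ := fun i j => P i j + P i a * (p * P a j) / s0 with hP'def
        set Q' : ι → ι → ℝ := fun i j => Q i j + Q i a * (q * Q a j) / t0 with hQ'def
        have hP'app : ∀ i j, P' i j = P i j + P i a * (p * P a j) / s0 := fun i j => by
          simp only [hP'def]
        have hQ'app : ∀ i j, Q' i j = Q i j + Q i a * (q * Q a j) / t0 := fun i j => by
          simp only [hQ'def]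
        have hP' : ∀ i j, 0 ≤ P' i j := fun i j => by
          rw [hP'app]
          have := hP i j; have := hP i a; have := hP a j
          positivity
        have hQ' : ∀ i j, 0 ≤ Q' i j := fun i j => by
          rw [hQ'app]
          have := hQ i j; have := hQ i a; have := hQ a j
          positivity
        have hsumP' : ∀ i, ∑ j ∈ s, P' i j = (∑ j ∈ s, P i j) + P i a * (E / D) := by
          intro i
          have h1 : ∀ j ∈ s, P' i j = P i j + (P i a * p / s0) * P a j := fun j _ => by
            rw [hP'app]; ring
          rw [Finset.sum_congr rfl h1, Finset.sum_add_distrib, ← Finset.mul_sum, ← hsPdef]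
          have e : P i a * p / s0 * sP = P i a * (E / D) := by
            rw [hs0def]; field_simp
          rw [e]
        have hsumQ' : ∀ i, ∑ j ∈ s, Q' i j = (∑ j ∈ s, Q i j) + Q i a * (E / D) := by
          intro i
          have h1 : ∀ j ∈ s, Q' i j = Q i j + (Q i a * q / t0) * Q a j := fun j _ => by
            rw [hQ'app]; ring
          rw [Finset.sum_congr rfl h1, Finset.sum_add_distrib, ← Finset.mul_sum, ← hsQdef]
          have e : Q i a * q / t0 * sQ = Q i a * (E / D) := by
            rw [ht0def]; field_simp
          rw [e]
        have hED1 : E / D ≤ 1 := (div_le_one hD0).2 hED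
        have hsumPQ' : ∀ i, ∑ j ∈ s, (P' i j + Q' i j)
            = (∑ j ∈ s, (P i j + Q i j)) + (P i a + Q i a) * (E / D) := by
          intro i
          rw [Finset.sum_add_distrib, hsumP' i, hsumQ' i, Finset.sum_add_distrib]
          ring
        have hbud'' : ∀ i ∈ s, ∑ j ∈ s, (P' i j + Q' i j) ≤ c i := by
          intro i hi
          rw [hsumPQ' i]
          have h1 : (P i a + Q i a) * (E / D) ≤ (P i a + Q i a) * 1 :=
            mul_le_mul_of_nonneg_left hED1 (by have := hP i a; have := hQ i a; linarith)
          have := hbud_s' i hi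
          linarith
        set R' : ι → ι → ℝ := fun i j => (p * P' i j) ^ (1/p) * (q * Q' j i) ^ (1/q)
          with hR'def
        have hR'app : ∀ i j, R' i j = (p * P' i j) ^ (1/p) * (q * Q' j i) ^ (1/q) :=
          fun i j => by simp only [hR'def]
        obtain ⟨w, hwpos, hw⟩ := ih P' Q' c R' hR'app hP' hQ' hbud''
        have hkey : ∀ i j, R i j + R i a * R a j / D ≤ R' i j := by
          intro i j
          have e1 : p * P' i j = (p * P i j) + ((p * P i a) * ((p * P a j) / s0)) := by
            rw [hP'app]; ring
          have e2 : q * Q' j i = (q * Q j i) + ((q * Q j a) * ((q * Q a i) / t0)) := by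
            rw [hQ'app]; ring
          have hx2 : (0:ℝ) ≤ (p * P i a) * ((p * P a j) / s0) := by
            have := hP i a; have := hP a j; positivity
          have hy2 : (0:ℝ) ≤ (q * Q j a) * ((q * Q a i) / t0) := by
            have := hQ j a; have := hQ a i; positivity
          have h2 := holder2_s11 hp hq hpq (mul_nonneg hp0.le (hP i j))
            (mul_nonneg hq0.le (hQ j i)) hx2 hy2
          rw [hR'app, e1, e2]
          have ex : ((p * P i a) * ((p * P a j) / s0)) ^ (1/p)
              = (p * P i a) ^ (1/p) * ((p * P a j) ^ (1/p) / s0 ^ (1/p)) := by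
            rw [Real.mul_rpow (mul_nonneg hp0.le (hP i a))
              (div_nonneg (mul_nonneg hp0.le (hP a j)) hs00.le),
              Real.div_rpow (mul_nonneg hp0.le (hP a j)) hs00.le]
          have ey : ((q * Q j a) * ((q * Q a i) / t0)) ^ (1/q)
              = (q * Q j a) ^ (1/q) * ((q * Q a i) ^ (1/q) / t0 ^ (1/q)) := by
            rw [Real.mul_rpow (mul_nonneg hq0.le (hQ j a))
              (div_nonneg (mul_nonneg hq0.le (hQ a i)) ht00.le),
              Real.div_rpow (mul_nonneg hq0.le (hQ a i)) ht00.le]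
          have ep : ((p * P i a) * ((p * P a j) / s0)) ^ (1/p)
                * ((q * Q j a) * ((q * Q a i) / t0)) ^ (1/q)
              = R i a * R a j / D := by
            rw [ex, ey, hRdef i a, hRdef a j, ← hst]
            have hsp : s0 ^ (1/p) ≠ 0 := (Real.rpow_pos_of_pos hs00 _).ne'
            have htp : t0 ^ (1/q) ≠ 0 := (Real.rpow_pos_of_pos ht00 _).ne'
            field_simp
          rw [hRdef i j]
          linarith [ep ▸ h2]
        have hApos : 0 < ∑ j ∈ s, R a j * w j :=
          Finset.sum_pos' (fun j hj => mul_nonneg (hR0 a j) (hwpos j hj).le)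
            ⟨j₀, hj₀s, mul_pos (lt_of_le_of_ne (hR0 a j₀) (Ne.symm hj₀)) (hwpos j₀ hj₀s)⟩
        set A := ∑ j ∈ s, R a j * w j with hAdef
        have hrow : ∀ i ∈ s, (∑ j ∈ s, R i j * w j) + R i a * (A / D)
            ≤ ∑ j ∈ s, R' i j * w j := by
          intro i hi
          have h1 : ∑ j ∈ s, (R i j + R i a * R a j / D) * w j ≤ ∑ j ∈ s, R' i j * w j :=
            Finset.sum_le_sum fun j hj =>
              mul_le_mul_of_nonneg_right (hkey i j) (hwpos j hj).le
          have h2 : ∑ j ∈ s, (R i j + R i a * R a j / D) * w j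
              = (∑ j ∈ s, R i j * w j) + (R i a / D) * A := by
            have e : ∀ j ∈ s, (R i j + R i a * R a j / D) * w j
                = R i j * w j + (R i a / D) * (R a j * w j) := fun j _ => by ring
            rw [Finset.sum_congr rfl e, Finset.sum_add_distrib, ← Finset.mul_sum, ← hAdef]
          have e3 : R i a * (A / D) = (R i a / D) * A := by ring
          rw [e3]
          linarith
        rcases eq_or_lt_of_le hED with hEeqD | hEltD
        · -- E = D : tight case
          set w' : ι → ℝ := fun i => if i = a then A / D else w i with hw'def
          have hWa : w' a = A / D := by simp [hw'def]
          have hWs : ∀ j ∈ s, w' j = w j := fun j hj => by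
            simp only [hw'def]; rw [if_neg (by rintro rfl; exact ha hj)]
          refine ⟨w', ?_, ?_⟩
          · intro i hi
            rcases Finset.mem_cons.1 hi with rfl | hi
            · rw [hWa]; exact div_pos hApos hD0
            · rw [hWs i hi]; exact hwpos i hi
          · intro i hi
            rcases Finset.mem_cons.1 hi with rfl | hi
            · rw [Finset.sum_cons, hWa]
              have hsC : ∑ j ∈ s, R i j * w' j = A :=
                Finset.sum_congr rfl fun j hj => by rw [hWs j hj]
              rw [hsC]
              have e : R i i * (A / D) + A = c i * (A / D) := by
                linear_combination (-1 : ℝ) * (mul_div_cancel₀ _ hD0.ne' : D * (A / D) = A) + (A / D) * hDdef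
              refine ⟨e.le, fun hlt => ?_⟩
              exfalso
              rw [Finset.sum_cons, hsplit] at hlt
              have hEc := hEchain
              rw [hEeqD, hDdef] at hEc
              linarith
            · rw [Finset.sum_cons, hWa, hWs i hi]
              have hsC : ∑ j ∈ s, R i j * w' j = ∑ j ∈ s, R i j * w j :=
                Finset.sum_congr rfl fun j hj => by rw [hWs j hj]
              rw [hsC]
              have h1 := hrow i hi
              have h2 := (hw i hi).1
              constructor
              · linarith
              · intro hlt
                rw [Finset.sum_cons] at hlt
                have hED1' : E / D = 1 := by rw [hEeqD]; exact div_self hD0.ne'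
                have hstrict : ∑ j ∈ s, (P' i j + Q' i j) < c i := by
                  rw [hsumPQ' i, hED1', mul_one]
                  linarith
                have := (hw i hi).2 hstrict
                linarith
        · -- E < D : slack case
          have hgap0 : ∀ i ∈ s,
              0 ≤ c i * w i - ((∑ j ∈ s, R i j * w j) + R i a * (A / D)) := fun i hi => by
            linarith [hrow i hi, (hw i hi).1]
          have hgappos : ∀ i ∈ s, R i a ≠ 0 →
              0 < c i * w i - ((∑ j ∈ s, R i j * w j) + R i a * (A / D)) := by
            intro i hi hne
            have hPia := hPR i a hne
            have hstrict : ∑ j ∈ s, (P' i j + Q' i j) < c i := by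
              rw [hsumPQ' i]
              have h1 : (P i a + Q i a) * (E / D) < (P i a + Q i a) * 1 := by
                apply mul_lt_mul_of_pos_left _ (by have := hQ i a; linarith)
                rw [div_lt_one hD0]; exact hEltD
              have := hbud_s' i hi
              linarith
            have := (hw i hi).2 hstrict
            linarith [hrow i hi]
          obtain ⟨t, ht0, htle⟩ := helperT s (fun i => R i a)
            (fun i => (c i * w i - ((∑ j ∈ s, R i j * w j) + R i a * (A / D))) / 2)
            (fun i _ => hR0 i a) (fun i hi => by linarith [hgap0 i hi])
            (fun i hi hne => by linarith [hgappos i hi hne])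
          set w' : ι → ℝ := fun i => if i = a then A / D + t else w i with hw'def
          have hWa : w' a = A / D + t := by simp [hw'def]
          have hWs : ∀ j ∈ s, w' j = w j := fun j hj => by
            simp only [hw'def]; rw [if_neg (by rintro rfl; exact ha hj)]
          refine ⟨w', ?_, ?_⟩
          · intro i hi
            rcases Finset.mem_cons.1 hi with rfl | hi
            · rw [hWa]; have := div_pos hApos hD0; linarith
            · rw [hWs i hi]; exact hwpos i hi
          · intro i hi
            rcases Finset.mem_cons.1 hi with rfl | hi
            · rw [Finset.sum_cons, hWa]
              have hsC : ∑ j ∈ s, R i j * w' j = A :=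
                Finset.sum_congr rfl fun j hj => by rw [hWs j hj]
              rw [hsC]
              have e : (c i - R i i) * (A / D) = A := by
                rw [hDdef]; field_simp; exact div_self hD0.ne'
              have hstrict : R i i * (A / D + t) + A < c i * (A / D + t) := by
                have hDpos := hD0
                rw [hDdef] at hDpos
                nlinarith
              exact ⟨hstrict.le, fun _ => hstrict⟩
            · rw [Finset.sum_cons, hWa, hWs i hi]
              have hsC : ∑ j ∈ s, R i j * w' j = ∑ j ∈ s, R i j * w j :=
                Finset.sum_congr rfl fun j hj => by rw [hWs j hj]
              rw [hsC]
              have h1 := htle i hi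
              have h2 := hgap0 i hi
              constructor
              · nlinarith [hR0 i a]
              · intro hlt
                rw [Finset.sum_cons] at hlt
                have hstrict : ∑ j ∈ s, (P' i j + Q' i j) < c i := by
                  rw [hsumPQ' i]
                  have hq1 : (P i a + Q i a) * (E / D) ≤ (P i a + Q i a) * 1 :=
                    mul_le_mul_of_nonneg_left hED1
                      (by have := hP i a; have := hQ i a; linarith)
                  have := hP i a; have := hQ i a
                  linarith
                have h3 := (hw i hi).2 hstrict
                have h4 := hrow i hi
                nlinarith [hR0 i a]
end keysec


section bridgesec
variable {p q : ℝ}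

lemma bridge1 (hp : 1 < p) (hq : 1 < q) (hpq : 1 / p + 1 / q = 1)
    {C : ℝ} (hC : 0 < C) (x α' : ℝ) :
    C * |x| ≤ (C * |x| ^ (α' * p)) ^ (1/p) * (C * |x| ^ ((1 - α') * q)) ^ (1/q) := by
  have hp0 : (0:ℝ) < p := by linarith
  have hq0 : (0:ℝ) < q := by linarith
  have e1 : (C * |x| ^ (α' * p)) ^ (1/p) = C ^ (1/p) * |x| ^ (α' * p * (1/p)) := by
    rw [Real.mul_rpow hC.le (Real.rpow_nonneg (abs_nonneg x) _), ← Real.rpow_mul (abs_nonneg x)]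
  have e2 : (C * |x| ^ ((1 - α') * q)) ^ (1/q) = C ^ (1/q) * |x| ^ ((1 - α') * q * (1/q)) := by
    rw [Real.mul_rpow hC.le (Real.rpow_nonneg (abs_nonneg x) _), ← Real.rpow_mul (abs_nonneg x)]
  have ep : α' * p * (1/p) = α' := by field_simp
  have eq' : (1 - α') * q * (1/q) = 1 - α' := by field_simp
  rw [e1, e2, ep, eq']
  rcases eq_or_ne x 0 with rfl | hx
  · rw [abs_zero, mul_zero]
    have h1 : (0:ℝ) ≤ C ^ (1/p) * (0:ℝ) ^ α' := by positivity
    have h2 : (0:ℝ) ≤ C ^ (1/q) * (0:ℝ) ^ (1 - α') := by positivity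
    nlinarith
  · have hx0 : 0 < |x| := abs_pos.2 hx
    have : C ^ (1/p) * |x| ^ α' * (C ^ (1/q) * |x| ^ (1 - α'))
        = (C ^ (1/p) * C ^ (1/q)) * (|x| ^ α' * |x| ^ (1 - α')) := by ring
    rw [this, ← Real.rpow_add hC, ← Real.rpow_add hx0, hpq,
      show α' + (1 - α') = 1 by ring, Real.rpow_one, Real.rpow_one]

lemma bridge2 (hp : 1 < p) (hq : 1 < q) (hpq : 1 / p + 1 / q = 1)
    {C E : ℝ} (hC : 0 < C) (hE : 0 < E) (x β' : ℝ) :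
    C * (|x| * E) ≤ (C * (|x| ^ (β' * p) * E)) ^ (1/p) * (C * (|x| ^ ((1 - β') * q) * E)) ^ (1/q) := by
  have h := bridge1 hp hq hpq (mul_pos hC hE) x β'
  have e0 : C * E * |x| = C * (|x| * E) := by ring
  have ea : C * E * |x| ^ (β' * p) = C * (|x| ^ (β' * p) * E) := by ring
  have eb : C * E * |x| ^ ((1 - β') * q) = C * (|x| ^ ((1 - β') * q) * E) := by ring
  rwa [e0, ea, eb] at h

lemma sum_ifzero {m : ℕ} (i : Fin m) (g : Fin m → ℝ) :
    ∑ j, (if j = i then 0 else g j) = ∑ j ∈ univ.erase i, g j := by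
  have h1 : ∑ j ∈ univ.erase i, (if j = i then (0:ℝ) else g j)
      = ∑ j, (if j = i then 0 else g j) := Finset.sum_erase _ (by simp)
  rw [← h1]
  exact Finset.sum_congr rfl fun j hj => if_neg (Finset.ne_of_mem_erase hj)
end bridgesec

/-- Theorem 6: either `L^p`-type criterion (general `α, β`, or the symmetric one) implies the `L¹` criterion with the same rate `ε`. -/

theorem theorem6
    (n : ℕ) (hn : 1 ≤ n)
    (p q : ℝ) (hp : 1 < p) (hq : 1 < q) (hpq : 1 / p + 1 / q = 1)
    (d G F : Fin n → ℝ) (hG : ∀ i, 0 < G i) (hF : ∀ i, 0 < F i)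
    (a b τ : Fin n → Fin n → ℝ) (hτ : ∀ i j, 0 ≤ τ i j)
    (ε : ℝ) (hε : 0 < ε) (ξ : Fin n → ℝ) (hξ : ∀ i, 0 < ξ i)
    (α β : Fin n → Fin n → ℝ)
    (hineq :
      (∀ i,
        (-d i + ε) * ξ i
          + G i * (ξ i * |a i i|
              + (1 / p) * ∑ j ∈ univ.erase i, ξ j * |a j i| ^ (α j i * p))
          + (1 / q) * ξ i * ∑ j ∈ univ.erase i, G j * |a i j| ^ ((1 - α i j) * q)
          + (1 / p) * F i * ∑ j, ξ j * |b j i| ^ (β j i * p) * exp (ε * τ j i)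
          + (1 / q) * ξ i * ∑ j, F j * |b i j| ^ ((1 - β i j) * q) * exp (ε * τ i j)
          ≤ 0) ∨
      (∀ i,
        (-d i + ε) * ξ i
          + G i * (ξ i * |a i i| + (1 / p) * ∑ j ∈ univ.erase i, ξ j * |a j i|)
          + (1 / q) * ξ i * ∑ j ∈ univ.erase i, G j * |a i j|
          + (1 / p) * F i * ∑ j, ξ j * |b j i| * exp (ε * τ j i)
          + (1 / q) * ξ i * ∑ j, F j * |b i j| * exp (ε * τ i j)
          ≤ 0)) :
    ∃ θ : Fin n → ℝ, (∀ i, 0 < θ i) ∧ ∀ i,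
      (-d i + ε) * θ i
        + G i * (θ i * |a i i| + ∑ j ∈ univ.erase i, θ j * |a j i|)
        + F i * ∑ j, θ j * |b j i| * exp (ε * τ j i) ≤ 0 := by
  classical
  have hp0 : (0:ℝ) < p := by linarith
  have hq0 : (0:ℝ) < q := by linarith
  -- Reduce case B to case A with α = β = 1/p
  obtain ⟨A, B, hiq⟩ : ∃ A B : Fin n → Fin n → ℝ, ∀ i,
      (-d i + ε) * ξ i
        + G i * (ξ i * |a i i|
            + (1 / p) * ∑ j ∈ univ.erase i, ξ j * |a j i| ^ (A j i * p))
        + (1 / q) * ξ i * ∑ j ∈ univ.erase i, G j * |a i j| ^ ((1 - A i j) * q)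
        + (1 / p) * F i * ∑ j, ξ j * |b j i| ^ (B j i * p) * exp (ε * τ j i)
        + (1 / q) * ξ i * ∑ j, F j * |b i j| ^ ((1 - B i j) * q) * exp (ε * τ i j)
        ≤ 0 := by
    rcases hineq with h | h
    · exact ⟨α, β, h⟩
    · refine ⟨fun _ _ => 1/p, fun _ _ => 1/p, fun i => ?_⟩
      have e1 : ∀ x : ℝ, |x| ^ ((1/p) * p) = |x| := fun x => by
        rw [one_div, inv_mul_cancel₀ (by linarith : p ≠ 0), Real.rpow_one]
      have e2 : ∀ x : ℝ, |x| ^ ((1 - 1/p) * q) = |x| := fun x => by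
        have h12 : (1:ℝ) - 1/p = 1/q := by linarith
        rw [h12, one_div, inv_mul_cancel₀ (by linarith : q ≠ 0), Real.rpow_one]
      simpa only [e1, e2] using h i
  -- the data fed to the key lemma
  set X : Fin n → Fin n → ℝ := fun i j =>
    (if j = i then 0 else (G i * ξ j) * |a j i| ^ (A j i * p))
      + (F i * ξ j) * (|b j i| ^ (B j i * p) * exp (ε * τ j i)) with hX
  set Y : Fin n → Fin n → ℝ := fun i j =>
    (if j = i then 0 else (G j * ξ i) * |a i j| ^ ((1 - A i j) * q))
      + (F j * ξ i) * (|b i j| ^ ((1 - B i j) * q) * exp (ε * τ i j)) with hY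
  set c : Fin n → ℝ := fun i => (d i - ε) * ξ i - G i * (ξ i * |a i i|) with hc
  have hXapp : ∀ i j, X i j = (if j = i then 0 else (G i * ξ j) * |a j i| ^ (A j i * p))
      + (F i * ξ j) * (|b j i| ^ (B j i * p) * exp (ε * τ j i)) := fun i j => by
    simp only [hX]
  have hYapp : ∀ i j, Y i j = (if j = i then 0 else (G j * ξ i) * |a i j| ^ ((1 - A i j) * q))
      + (F j * ξ i) * (|b i j| ^ ((1 - B i j) * q) * exp (ε * τ i j)) := fun i j => by
    simp only [hY]
  have hX0 : ∀ i j, 0 ≤ X i j := by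
    intro i j
    rw [hXapp]
    have h1 := hG i; have h2 := hξ j; have h3 := hF i
    have h4 : (0:ℝ) ≤ |a j i| ^ (A j i * p) := Real.rpow_nonneg (abs_nonneg _) _
    have h5 : (0:ℝ) ≤ |b j i| ^ (B j i * p) := Real.rpow_nonneg (abs_nonneg _) _
    have h6 : (0:ℝ) < exp (ε * τ j i) := exp_pos _
    have hb : (0:ℝ) ≤ (F i * ξ j) * (|b j i| ^ (B j i * p) * exp (ε * τ j i)) :=
      mul_nonneg (mul_nonneg h3.le h2.le) (mul_nonneg h5 h6.le)
    have ha' : (0:ℝ) ≤ (G i * ξ j) * |a j i| ^ (A j i * p) :=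
      mul_nonneg (mul_nonneg h1.le h2.le) h4
    split_ifs <;> linarith
  have hY0 : ∀ i j, 0 ≤ Y i j := by
    intro i j
    rw [hYapp]
    have h1 := hG j; have h2 := hξ i; have h3 := hF j
    have h4 : (0:ℝ) ≤ |a i j| ^ ((1 - A i j) * q) := Real.rpow_nonneg (abs_nonneg _) _
    have h5 : (0:ℝ) ≤ |b i j| ^ ((1 - B i j) * q) := Real.rpow_nonneg (abs_nonneg _) _
    have h6 : (0:ℝ) < exp (ε * τ i j) := exp_pos _
    have hb : (0:ℝ) ≤ (F j * ξ i) * (|b i j| ^ ((1 - B i j) * q) * exp (ε * τ i j)) :=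
      mul_nonneg (mul_nonneg h3.le h2.le) (mul_nonneg h5 h6.le)
    have ha' : (0:ℝ) ≤ (G j * ξ i) * |a i j| ^ ((1 - A i j) * q) :=
      mul_nonneg (mul_nonneg h1.le h2.le) h4
    split_ifs <;> linarith
  -- budget
  have hbudget : ∀ i ∈ (univ : Finset (Fin n)), ∑ j, (X i j / p + Y i j / q) ≤ c i := by
    intro i _
    have eX : ∑ j, X i j
        = G i * (∑ j ∈ univ.erase i, ξ j * |a j i| ^ (A j i * p))
          + F i * ∑ j, ξ j * |b j i| ^ (B j i * p) * exp (ε * τ j i) := by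
      have e : ∀ j, X i j = (if j = i then 0 else G i * (ξ j * |a j i| ^ (A j i * p)))
          + F i * (ξ j * |b j i| ^ (B j i * p) * exp (ε * τ j i)) := fun j => by
        rw [hXapp]; split_ifs <;> ring
      rw [Finset.sum_congr rfl fun j _ => e j, Finset.sum_add_distrib,
        sum_ifzero i _, ← Finset.mul_sum, ← Finset.mul_sum]
    have eY : ∑ j, Y i j
        = ξ i * (∑ j ∈ univ.erase i, G j * |a i j| ^ ((1 - A i j) * q))
          + ξ i * ∑ j, F j * |b i j| ^ ((1 - B i j) * q) * exp (ε * τ i j) := by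
      have e : ∀ j, Y i j = (if j = i then 0 else ξ i * (G j * |a i j| ^ ((1 - A i j) * q)))
          + ξ i * (F j * |b i j| ^ ((1 - B i j) * q) * exp (ε * τ i j)) := fun j => by
        rw [hYapp]; split_ifs <;> ring
      rw [Finset.sum_congr rfl fun j _ => e j, Finset.sum_add_distrib,
        sum_ifzero i _, ← Finset.mul_sum, ← Finset.mul_sum]
    have esum : ∑ j, (X i j / p + Y i j / q) = (∑ j, X i j) / p + (∑ j, Y i j) / q := by
      rw [Finset.sum_add_distrib, Finset.sum_div, Finset.sum_div]
    rw [esum, eX, eY, hc]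
    have h := hiq i
    set S1 := ∑ j ∈ univ.erase i, ξ j * |a j i| ^ (A j i * p) with hS1
    set S2 := ∑ j, ξ j * |b j i| ^ (B j i * p) * exp (ε * τ j i) with hS2
    set S3 := ∑ j ∈ univ.erase i, G j * |a i j| ^ ((1 - A i j) * q) with hS3
    set S4 := ∑ j, F j * |b i j| ^ ((1 - B i j) * q) * exp (ε * τ i j) with hS4
    ring_nf at h ⊢
    linarith [h]
  -- apply the key lemma
  have hpne : p ≠ 0 := by linarith
  have hqne : q ≠ 0 := by linarith
  set Pm : Fin n → Fin n → ℝ := fun i j => X i j / p with hPm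
  set Qm : Fin n → Fin n → ℝ := fun i j => Y i j / q with hQm
  set R : Fin n → Fin n → ℝ := fun i j => X i j ^ (1/p) * Y j i ^ (1/q) with hR
  have hRapp : ∀ i j, R i j = X i j ^ (1/p) * Y j i ^ (1/q) := fun i j => by simp only [hR]
  have hRdef : ∀ i j, R i j = (p * Pm i j) ^ (1/p) * (q * Qm j i) ^ (1/q) := by
    intro i j
    simp only [hR, hPm, hQm]
    rw [mul_comm p (X i j / p), div_mul_cancel₀ _ hpne,
      mul_comm q (Y j i / q), div_mul_cancel₀ _ hqne]
  have hPm0 : ∀ i j, 0 ≤ Pm i j := fun i j => by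
    simp only [hPm]; exact div_nonneg (hX0 i j) hp0.le
  have hQm0 : ∀ i j, 0 ≤ Qm i j := fun i j => by
    simp only [hQm]; exact div_nonneg (hY0 i j) hq0.le
  have hbudget2 : ∀ i ∈ (univ : Finset (Fin n)), ∑ j, (Pm i j + Qm i j) ≤ c i := by
    intro i hi
    simp only [hPm, hQm]
    exact hbudget i hi
  obtain ⟨w, hwpos, hw⟩ := keyM hp hq hpq univ Pm Qm c R hRdef hPm0 hQm0 hbudget2
  have hwpos' : ∀ j, 0 < w j := fun j => hwpos j (mem_univ j)
  -- pointwise domination of the L¹ entries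
  have hK : ∀ i j, (if j = i then 0 else (G i * ξ j) * |a j i|)
      + (F i * ξ j) * (|b j i| * exp (ε * τ j i)) ≤ R i j := by
    intro i j
    rw [hRapp i j, hXapp i j, hYapp j i]
    have t2 : (F i * ξ j) * (|b j i| * exp (ε * τ j i)) ≤
        ((F i * ξ j) * (|b j i| ^ (B j i * p) * exp (ε * τ j i))) ^ (1/p) *
        ((F i * ξ j) * (|b j i| ^ ((1 - B j i) * q) * exp (ε * τ j i))) ^ (1/q) :=
      bridge2 hp hq hpq (mul_pos (hF i) (hξ j)) (exp_pos _) _ _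
    have t1 : (if j = i then (0:ℝ) else (G i * ξ j) * |a j i|) ≤
        (if j = i then (0:ℝ) else (G i * ξ j) * |a j i| ^ (A j i * p)) ^ (1/p) *
        (if i = j then (0:ℝ) else (G i * ξ j) * |a j i| ^ ((1 - A j i) * q)) ^ (1/q) := by
      by_cases hji : j = i
      · rw [if_pos hji, if_pos hji, if_pos hji.symm,
          Real.zero_rpow (by positivity : (1/p:ℝ) ≠ 0), zero_mul]
      · simp only [if_neg hji, if_neg (Ne.symm hji)]
        exact bridge1 hp hq hpq (mul_pos (hG i) (hξ j)) _ _
    have hu1 : (0:ℝ) ≤ if j = i then (0:ℝ) else (G i * ξ j) * |a j i| ^ (A j i * p) := by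
      split_ifs with h
      · exact le_refl 0
      · exact mul_nonneg (mul_pos (hG i) (hξ j)).le (Real.rpow_nonneg (abs_nonneg _) _)
    have hv1 : (0:ℝ) ≤ if i = j then (0:ℝ) else (G i * ξ j) * |a j i| ^ ((1 - A j i) * q) := by
      split_ifs with h
      · exact le_refl 0
      · exact mul_nonneg (mul_pos (hG i) (hξ j)).le (Real.rpow_nonneg (abs_nonneg _) _)
    have hu2 : (0:ℝ) ≤ (F i * ξ j) * (|b j i| ^ (B j i * p) * exp (ε * τ j i)) :=
      mul_nonneg (mul_pos (hF i) (hξ j)).le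
        (mul_nonneg (Real.rpow_nonneg (abs_nonneg _) _) (exp_pos _).le)
    have hv2 : (0:ℝ) ≤ (F i * ξ j) * (|b j i| ^ ((1 - B j i) * q) * exp (ε * τ j i)) :=
      mul_nonneg (mul_pos (hF i) (hξ j)).le
        (mul_nonneg (Real.rpow_nonneg (abs_nonneg _) _) (exp_pos _).le)
    have hh := holder2_s11 hp hq hpq hu1 hv1 hu2 hv2
    linarith [add_le_add t1 t2]
  -- conclusion with θ = ξ * w
  refine ⟨fun i => ξ i * w i, fun i => mul_pos (hξ i) (hwpos' i), fun i => ?_⟩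
  show (-d i + ε) * (ξ i * w i)
      + G i * ((ξ i * w i) * |a i i| + ∑ j ∈ univ.erase i, (ξ j * w j) * |a j i|)
      + F i * ∑ j, (ξ j * w j) * |b j i| * exp (ε * τ j i) ≤ 0
  have hrow := (hw i (mem_univ i)).1
  have hKsum : ∑ j, ((if j = i then 0 else (G i * ξ j) * |a j i|)
      + (F i * ξ j) * (|b j i| * exp (ε * τ j i))) * w j ≤ ∑ j, R i j * w j :=
    Finset.sum_le_sum fun j _ => mul_le_mul_of_nonneg_right (hK i j) (hwpos' j).le
  have eSplit : ∑ j, ((if j = i then 0 else (G i * ξ j) * |a j i|)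
      + (F i * ξ j) * (|b j i| * exp (ε * τ j i))) * w j
      = G i * (∑ j ∈ univ.erase i, (ξ j * w j) * |a j i|)
        + F i * ∑ j, (ξ j * w j) * |b j i| * exp (ε * τ j i) := by
    have e : ∀ j, ((if j = i then 0 else (G i * ξ j) * |a j i|)
        + (F i * ξ j) * (|b j i| * exp (ε * τ j i))) * w j
        = (if j = i then 0 else G i * ((ξ j * w j) * |a j i|))
          + F i * ((ξ j * w j) * |b j i| * exp (ε * τ j i)) := fun j => by
      split_ifs <;> ring
    rw [Finset.sum_congr rfl fun j _ => e j, Finset.sum_add_distrib, sum_ifzero i _,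
      ← Finset.mul_sum, ← Finset.mul_sum]
  have hcapp : c i = (d i - ε) * ξ i - G i * (ξ i * |a i i|) := by simp only [hc]
  calc (-d i + ε) * (ξ i * w i)
      + G i * ((ξ i * w i) * |a i i| + ∑ j ∈ univ.erase i, (ξ j * w j) * |a j i|)
      + F i * ∑ j, (ξ j * w j) * |b j i| * exp (ε * τ j i)
      = (G i * (∑ j ∈ univ.erase i, (ξ j * w j) * |a j i|)
          + F i * ∑ j, (ξ j * w j) * |b j i| * exp (ε * τ j i)) - c i * w i := by
        rw [hcapp]; ring
    _ = (∑ j, ((if j = i then 0 else (G i * ξ j) * |a j i|)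
          + (F i * ξ j) * (|b j i| * exp (ε * τ j i))) * w j) - c i * w i := by rw [eSplit]
    _ ≤ (∑ j, R i j * w j) - c i * w i := by linarith [hKsum]
    _ ≤ 0 := by linarith [hrow]
end
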